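/- arXiv:2009.10487 — 10 statements merged into one kernel-verified Lean document; each statement's English description precedes it below -/
import Mathlib

section
/- Let Φ_f = (P_n, F^×, φ, f) be a skew gain graph whose underlying graph is the path P_n on n ≥ 2 vertices. Then its Laplacian characteristic polynomial is χ(Φ_f, x) = (x − 2)^{n−2}(x − 1)² + Σ_M (−1)^{|M|} · (∏_{e ∈ M} g(φ(e))) · ∏_{v ∉ V(M)} (x − d(v)), where the sum runs over all nonempty matchings M of P_n (sets of pairwise non-incident edges), |M| is the number of edges of M, V(M) is the set of vertices covered by M, and d(v) is the degree of v in P_n. -/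
open scoped Classical
open Matrix Finset SimpleGraph

variable {F V : Type*}

/-- The adjacency matrix of a skew gain graph `(G, φ)`: the `(u,v)` entry is the skew gain
`φ u v` if `u` and `v` are adjacent, and `0` otherwise. -/
noncomputable def sgAdj [Fintype V] [Field F] (G : SimpleGraph V) (φ : V → V → F) :
    Matrix V V F :=
  Matrix.of fun u v => if G.Adj u v then φ u v else 0

/-- The degree of a vertex `v` of `G`, i.e. the number of its neighbours. -/
noncomputable def sgDeg [Fintype V] (G : SimpleGraph V) (v : V) : ℕ :=
  (Finset.univ.filter fun u => G.Adj v u).card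

/-- The Laplacian matrix `L(Φ_f) = D(Φ_f) - A(Φ_f)` of a skew gain graph. -/
noncomputable def sgLap [Fintype V] [DecidableEq V] [Field F] (G : SimpleGraph V)
    (φ : V → V → F) : Matrix V V F :=
  Matrix.diagonal (fun v => (sgDeg G v : F)) - sgAdj G φ

/-- For an (unordered) edge `e = {u,v}`, the quantity `g(φ(e)) = φ(u,v) * φ(v,u)`; for a skew
gain graph this equals `φ(u,v) * f(φ(u,v))` and is independent of the orientation of `e`. -/
noncomputable def sgGainSq [Field F] (φ : V → V → F) : Sym2 V → F :=
  Sym2.lift ⟨fun u v => φ u v * φ v u, fun _ _ => mul_comm _ _⟩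

/-- A (nonempty) matching in `G`, given as a set of edges of `G` that are pairwise
non-incident. -/
def IsMatchingSet {V : Type*} (G : SimpleGraph V) (M : Finset (Sym2 V)) : Prop :=
  (∀ e ∈ M, e ∈ G.edgeSet) ∧
    ∀ e ∈ M, ∀ e' ∈ M, e ≠ e' → ∀ v : V, ¬(v ∈ e ∧ v ∈ e')

namespace SkewAux
set_option linter.unusedSectionVars false

variable [DecidableEq V]

/-- The pairwise non-incidence condition of a matching. -/
def PW {V : Type*} (M : Finset (Sym2 V)) : Prop :=
  ∀ e ∈ M, ∀ e' ∈ M, e ≠ e' → ∀ v : V, ¬(v ∈ e ∧ v ∈ e')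

lemma PW.eq {M : Finset (Sym2 V)} (h : PW M) {e e' : Sym2 V} (he : e ∈ M) (he' : e' ∈ M)
    {v : V} (hv : v ∈ e) (hv' : v ∈ e') : e = e' := by
  by_contra hne; exact h e he e' he' hne v ⟨hv, hv'⟩

lemma PW.mono {M M' : Finset (Sym2 V)} (hsub : M' ⊆ M) (h : PW M) : PW M' :=
  fun e he e' he' hne v => h e (hsub he) e' (hsub he') hne v

/-- The involution attached to a matching: swap the two endpoints of each matched edge. -/
noncomputable def mSwap (M : Finset (Sym2 V)) (v : V) : V :=
  if h : ∃ e ∈ M, v ∈ e then Sym2.Mem.other h.choose_spec.2 else v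

lemma mSwap_spec {M : Finset (Sym2 V)} (hM : PW M) {e : Sym2 V} (he : e ∈ M) {v : V}
    (hv : v ∈ e) : s(v, mSwap M v) = e := by
  have h : ∃ e ∈ M, v ∈ e := ⟨e, he, hv⟩
  rw [mSwap, dif_pos h, Sym2.other_spec]
  exact hM.eq h.choose_spec.1 he h.choose_spec.2 hv

lemma mSwap_of_forall {M : Finset (Sym2 V)} {v : V} (h : ∀ e ∈ M, v ∉ e) :
    mSwap M v = v := by
  rw [mSwap, dif_neg]
  push_neg
  exact h

lemma mSwap_invol {M : Finset (Sym2 V)} (hM : PW M) : Function.Involutive (mSwap M) := by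
  intro v
  by_cases h : ∃ e ∈ M, v ∈ e
  · obtain ⟨e, he, hv⟩ := h
    have h1 : s(v, mSwap M v) = e := mSwap_spec hM he hv
    have hw : mSwap M v ∈ e := by rw [← h1]; exact Sym2.mem_mk_right _ _
    have h2 : s(mSwap M v, mSwap M (mSwap M v)) = e := mSwap_spec hM he hw
    have h3 : s(mSwap M v, mSwap M (mSwap M v)) = s(mSwap M v, v) := by
      rw [h2, ← h1, Sym2.eq_swap]
    exact Sym2.congr_right.mp h3
  · push_neg at h
    have hv := mSwap_of_forall h
    rw [hv, hv]

/-- The permutation attached to a matching. -/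
noncomputable def mPerm (M : Finset (Sym2 V)) (hM : PW M) : Equiv.Perm V :=
  Function.Involutive.toPerm _ (mSwap_invol hM)

@[simp] lemma mPerm_apply {M : Finset (Sym2 V)} (hM : PW M) (v : V) :
    mPerm M hM v = mSwap M v := rfl

/-- On a path, a permutation moving every vertex by at most one is an involution. -/
lemma path_invol {n : ℕ} (σ : Equiv.Perm (Fin n))
    (h : ∀ i, σ i = i ∨ (pathGraph n).Adj (σ i) i) : ∀ i, σ (σ i) = i := by
  have key : ∀ k : ℕ, ∀ i : Fin n, (i : ℕ) = k → σ (σ i) = i := by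
    intro k
    induction k using Nat.strong_induction_on with
    | _ k IH =>
    intro i hik
    subst hik
    rcases h i with hi | hi
    · rw [hi, hi]
    · rw [pathGraph_adj] at hi
      rcases hi with hi | hi
      · have := IH (σ i) (by omega) (σ i) rfl
        exact σ.injective this
      · set k := σ.symm i with hk
        have hσk : σ k = i := σ.apply_symm_apply i
        rcases h k with h2 | h2
        · exfalso
          have h3 : i = k := by rw [← hσk, h2]
          have h4 : σ i = i := by rw [h3, h2, ← h3]
          omega
        · rw [hσk, pathGraph_adj] at h2
          rcases h2 with h2 | h2
          · have : k = σ i := Fin.ext (by omega)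
            rw [← this, hσk]
          · exfalso
            have := IH (k : ℕ) (by omega) k rfl
            rw [hσk] at this
            omega
  exact fun i => key (i : ℕ) i rfl

variable [Fintype V] [Field F]

lemma entry_diag (G : SimpleGraph V) (φ : V → V → F) (x : F) (i : V) :
    (x • (1 : Matrix V V F) - sgLap G φ) i i = x - (sgDeg G i : F) := by
  simp [sgLap, sgAdj, Matrix.sub_apply, Matrix.smul_apply, Matrix.one_apply,
    Matrix.diagonal_apply_eq, G.irrefl]

lemma entry_ne (G : SimpleGraph V) (φ : V → V → F) (x : F) {i j : V} (hij : j ≠ i) :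
    (x • (1 : Matrix V V F) - sgLap G φ) j i = if G.Adj j i then φ j i else 0 := by
  simp [sgLap, sgAdj, Matrix.sub_apply, Matrix.smul_apply, Matrix.one_apply_ne hij,
    Matrix.diagonal_apply_ne _ hij]

/-- Endpoints of an unordered pair, as a finset. -/
def eVerts : Sym2 V → Finset V :=
  Sym2.lift ⟨fun a b => {a, b}, fun a b => by simp [Finset.pair_comm]⟩

@[simp] lemma mem_eVerts {v : V} {e : Sym2 V} : v ∈ eVerts e ↔ v ∈ e := by
  induction e using Sym2.ind with
  | _ a b => simp [eVerts, Sym2.mem_iff]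

/-- The product of the entries of `xI - L` along the permutation of a matching. -/
lemma prod_mPerm (G : SimpleGraph V) (φ : V → V → F) (x : F)
    {M : Finset (Sym2 V)} (hE : ∀ e ∈ M, e ∈ G.edgeSet) (hM : PW M) :
    ∏ i, (x • (1 : Matrix V V F) - sgLap G φ) (mPerm M hM i) i
      = (∏ e ∈ M, sgGainSq φ e) *
        ∏ v ∈ Finset.univ.filter (fun v => ∀ e ∈ M, v ∉ e), (x - (sgDeg G v : F)) := by
  classical
  rw [← Finset.prod_filter_mul_prod_filter_not Finset.univ (fun v => ∀ e ∈ M, v ∉ e)]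
  rw [mul_comm]
  congr 1
  · -- matched part
    have hset : Finset.univ.filter (fun v => ¬ ∀ e ∈ M, v ∉ e) = M.biUnion eVerts := by
      ext v
      simp only [Finset.mem_filter, Finset.mem_univ, true_and, Finset.mem_biUnion, mem_eVerts]
      push_neg
      rfl
    rw [hset, Finset.prod_biUnion]
    · refine Finset.prod_congr rfl (fun e he => ?_)
      induction e using Sym2.ind with
      | _ a b =>
        have hadj : G.Adj a b := (SimpleGraph.mem_edgeSet G).mp (hE _ he)
        have hab : a ≠ b := hadj.ne
        have hsa : mSwap M a = b := by
          have := mSwap_spec hM he (Sym2.mem_mk_left a b)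
          exact Sym2.congr_right.mp this
        have hsb : mSwap M b = a := by
          have := (mSwap_spec hM he (Sym2.mem_mk_right a b)).trans Sym2.eq_swap
          exact Sym2.congr_right.mp this
        have heV : eVerts s(a, b) = {a, b} := rfl
        rw [heV, Finset.prod_pair hab, mPerm_apply, mPerm_apply, hsa, hsb,
          entry_ne G φ x hab.symm, entry_ne G φ x hab,
          if_pos hadj.symm, if_pos hadj]
        show φ b a * φ a b = sgGainSq φ s(a, b)
        rw [sgGainSq, Sym2.lift_mk]
        ring
    · intro e he e' he' hne
      simp only [Function.onFun]
      rw [Finset.disjoint_left]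
      intro v hv hv'
      exact hM e he e' he' hne v ⟨mem_eVerts.mp hv, mem_eVerts.mp hv'⟩
  · -- unmatched part
    refine Finset.prod_congr rfl (fun v hv => ?_)
    rw [Finset.mem_filter] at hv
    rw [mPerm_apply, mSwap_of_forall hv.2, entry_diag]

/-- Sign of the permutation of a matching. -/
lemma sign_mPerm : ∀ (M : Finset (Sym2 V)) (hM : PW M), (∀ e ∈ M, ¬e.IsDiag) →
    Equiv.Perm.sign (mPerm M hM) = (-1) ^ M.card := by
  intro M
  induction M using Finset.induction_on with
  | empty =>
    intro hM _
    have h1 : mPerm ∅ hM = 1 := by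
      ext v
      simp only [mPerm_apply, Equiv.Perm.coe_one, id_eq]
      exact mSwap_of_forall (by simp)
    rw [h1]
    simp
  | @insert e M' he IH =>
    intro hM hD
    have hM' : PW M' := hM.mono (Finset.subset_insert e M')
    induction e using Sym2.ind with
    | _ a b =>
    have hab : a ≠ b := fun h => hD _ (Finset.mem_insert_self _ _) (by rw [h]; simp)
    have hae : ∀ e' ∈ M', a ∉ e' := by
      intro e' he' ha
      exact hM _ (Finset.mem_insert_self _ _) e' (Finset.mem_insert_of_mem he')
        (fun h => he (h ▸ he')) a ⟨Sym2.mem_mk_left a b, ha⟩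
    have hbe : ∀ e' ∈ M', b ∉ e' := by
      intro e' he' hb
      exact hM _ (Finset.mem_insert_self _ _) e' (Finset.mem_insert_of_mem he')
        (fun h => he (h ▸ he')) b ⟨Sym2.mem_mk_right a b, hb⟩
    have hkey : mPerm (insert s(a,b) M') hM = Equiv.swap a b * mPerm M' hM' := by
      ext v
      simp only [mPerm_apply, Equiv.Perm.coe_mul, Function.comp_apply]
      by_cases hva : a = v
      · subst hva
        rw [mSwap_of_forall hae, Equiv.swap_apply_left]
        have := mSwap_spec hM (Finset.mem_insert_self _ _) (Sym2.mem_mk_left a b)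
        exact Sym2.congr_right.mp this
      · by_cases hvb : b = v
        · subst hvb
          rw [mSwap_of_forall hbe, Equiv.swap_apply_right]
          have := (mSwap_spec hM (Finset.mem_insert_self _ _)
            (Sym2.mem_mk_right a b)).trans Sym2.eq_swap
          exact Sym2.congr_right.mp this
        · by_cases hv : ∃ e' ∈ M', v ∈ e'
          · obtain ⟨e', he', hve'⟩ := hv
            have h1 : s(v, mSwap (insert s(a,b) M') v) = e' :=
              mSwap_spec hM (Finset.mem_insert_of_mem he') hve'
            have h2 : s(v, mSwap M' v) = e' := mSwap_spec hM' he' hve'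
            have h3 : mSwap (insert s(a,b) M') v = mSwap M' v :=
              Sym2.congr_right.mp (h1.trans h2.symm)
            rw [h3]
            have hw : mSwap M' v ∈ e' := by
              rw [← h2]; exact Sym2.mem_mk_right _ _
            exact (Equiv.swap_apply_of_ne_of_ne
              (fun (h : mSwap M' v = a) => hae e' he' (h ▸ hw))
              (fun (h : mSwap M' v = b) => hbe e' he' (h ▸ hw))).symm
          · push_neg at hv
            have hvall : ∀ e' ∈ insert s(a,b) M', v ∉ e' := by
              intro e' he'
              rcases Finset.mem_insert.mp he' with h | h
              · subst h
                simp only [Sym2.mem_iff]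
                push_neg
                exact ⟨Ne.symm hva, Ne.symm hvb⟩
              · exact hv e' h
            rw [mSwap_of_forall hvall, mSwap_of_forall hv,
              Equiv.swap_apply_of_ne_of_ne (Ne.symm hva) (Ne.symm hvb)]
    rw [hkey, _root_.map_mul, Equiv.Perm.sign_swap hab,
      IH hM' (fun e' he' => hD e' (Finset.mem_insert_of_mem he')),
      Finset.card_insert_of_notMem he, pow_succ]
    exact mul_comm _ _


/-- The matching attached to a permutation: the pairs `{i, σ i}` for moved points `i`. -/
noncomputable def Mof [Fintype V] (σ : Equiv.Perm V) : Finset (Sym2 V) :=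
  (Finset.univ (α := V) |>.filter fun i => σ i ≠ i).image fun i => s(i, σ i)

lemma mem_Mof [Fintype V] {σ : Equiv.Perm V} {e : Sym2 V} :
    e ∈ Mof σ ↔ ∃ i, σ i ≠ i ∧ s(i, σ i) = e := by
  simp [Mof, Finset.mem_image, Finset.mem_filter]

lemma Mof_edges {n : ℕ} {σ : Equiv.Perm (Fin n)}
    (h : ∀ i, σ i = i ∨ (pathGraph n).Adj (σ i) i) :
    ∀ e ∈ Mof σ, e ∈ (pathGraph n).edgeSet := by
  intro e he
  obtain ⟨i, hi, rfl⟩ := mem_Mof.mp he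
  rw [SimpleGraph.mem_edgeSet]
  rcases h i with h' | h'
  · exact absurd h' hi
  · exact h'.symm

lemma Mof_PW [Fintype V] {σ : Equiv.Perm V} (hinv : ∀ i, σ (σ i) = i) : PW (Mof σ) := by
  have key : ∀ (i v : V), v ∈ s(i, σ i) → s(i, σ i) = s(v, σ v) := by
    intro i v hv
    rcases Sym2.mem_iff.mp hv with rfl | rfl
    · rfl
    · rw [hinv i]
      exact Sym2.eq_swap
  rintro e he e' he' hne v ⟨hv, hv'⟩
  apply hne
  obtain ⟨i, hi, rfl⟩ := mem_Mof.mp he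
  obtain ⟨j, hj, rfl⟩ := mem_Mof.mp he'
  rw [key i v hv, key j v hv']

lemma mPerm_Mof [Fintype V] {σ : Equiv.Perm V} (hinv : ∀ i, σ (σ i) = i) (hPW : PW (Mof σ)) :
    mPerm (Mof σ) hPW = σ := by
  ext v
  simp only [mPerm_apply]
  by_cases hv : σ v = v
  · rw [mSwap_of_forall, hv]
    intro e he hve
    obtain ⟨i, hi, rfl⟩ := mem_Mof.mp he
    rcases Sym2.mem_iff.mp hve with rfl | rfl
    · exact hi hv
    · exact hi (((hinv i).symm.trans hv).symm)
  · have he : s(v, σ v) ∈ Mof σ := mem_Mof.mpr ⟨v, hv, rfl⟩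
    exact Sym2.congr_right.mp (mSwap_spec hPW he (Sym2.mem_mk_left _ _))

lemma Mof_mPerm {M : Finset (Sym2 V)} (hM : PW M) (hD : ∀ e ∈ M, ¬e.IsDiag) :
    Mof (mPerm M hM) = M := by
  ext e
  constructor
  · intro he
    obtain ⟨i, hi, rfl⟩ := mem_Mof.mp he
    simp only [mPerm_apply] at hi ⊢
    by_cases h : ∃ e' ∈ M, i ∈ e'
    · obtain ⟨e', he', hie'⟩ := h
      rw [mSwap_spec hM he' hie']
      exact he'
    · push_neg at h
      exact absurd (mSwap_of_forall h) hi
  · intro he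
    induction e using Sym2.ind with
    | _ a b =>
    have hab : a ≠ b := fun h => hD _ he (by rw [h]; simp)
    have hsa : mSwap M a = b :=
      Sym2.congr_right.mp (mSwap_spec hM he (Sym2.mem_mk_left a b))
    refine mem_Mof.mpr ⟨a, ?_, ?_⟩
    · simp only [mPerm_apply, hsa]
      exact hab.symm
    · simp only [mPerm_apply, hsa]

lemma card_val_eq {n : ℕ} (c : ℕ) :
    ((Finset.univ : Finset (Fin n)).filter fun u : Fin n => (u : ℕ) = c).card
      = if c < n then 1 else 0 := by
  split_ifs with h
  · rw [Finset.card_eq_one]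
    refine ⟨⟨c, h⟩, ?_⟩
    ext u
    simp [Fin.ext_iff]
  · rw [Finset.card_eq_zero]
    ext u
    simp only [Finset.mem_filter, Finset.mem_univ, true_and, Finset.notMem_empty, iff_false]
    have := u.isLt
    omega

lemma sgDeg_path {n : ℕ} (v : Fin n) :
    sgDeg (pathGraph n) v
      = (if (v : ℕ) + 1 < n then 1 else 0) + (if 1 ≤ (v : ℕ) then 1 else 0) := by
  rw [sgDeg]
  have hsplit : (Finset.univ.filter fun u => (pathGraph n).Adj v u)
      = (Finset.univ.filter fun u : Fin n => (u : ℕ) = (v : ℕ) + 1)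
        ∪ (Finset.univ.filter fun u : Fin n => 1 ≤ (v : ℕ) ∧ (u : ℕ) = (v : ℕ) - 1) := by
    ext u
    simp only [Finset.mem_filter, Finset.mem_union, Finset.mem_univ, true_and, pathGraph_adj]
    have := u.isLt
    omega
  rw [hsplit, Finset.card_union_of_disjoint]
  · congr 1
    · rw [card_val_eq]
    · by_cases h1 : 1 ≤ (v : ℕ)
      · rw [if_pos h1]
        have : (Finset.univ.filter fun u : Fin n => 1 ≤ (v : ℕ) ∧ (u : ℕ) = (v : ℕ) - 1)
            = Finset.univ.filter fun u : Fin n => (u : ℕ) = (v : ℕ) - 1 := by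
          ext u
          simp [h1]
        rw [this, card_val_eq, if_pos (by have := v.isLt; omega)]
      · rw [if_neg h1, Finset.card_eq_zero]
        ext u
        simp only [Finset.mem_filter, Finset.mem_univ, true_and, Finset.notMem_empty, iff_false,
          not_and]
        intro h
        exact absurd h h1
  · rw [Finset.disjoint_left]
    intro u hu hu'
    simp only [Finset.mem_filter, Finset.mem_univ, true_and] at hu hu'
    omega

lemma prod_deg {n : ℕ} (hn : 2 ≤ n) (x : F) :
    ∏ v : Fin n, (x - (sgDeg (pathGraph n) v : F)) = (x - 2) ^ (n - 2) * (x - 1) ^ 2 := by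
  have h0 : 0 < n := by omega
  have h1 : n - 1 < n := by omega
  set a : Fin n := ⟨0, h0⟩ with ha
  set b : Fin n := ⟨n - 1, h1⟩ with hb
  have hab : b ≠ a := by
    simp only [ha, hb, ne_eq, Fin.mk.injEq]
    omega
  have hda : sgDeg (pathGraph n) a = 1 := by
    rw [sgDeg_path]
    have hv : (a : ℕ) = 0 := rfl
    rw [hv, if_pos (by omega), if_neg (by omega)]
  have hdb : sgDeg (pathGraph n) b = 1 := by
    rw [sgDeg_path]
    have hv : (b : ℕ) = n - 1 := rfl
    rw [hv, if_neg (by omega), if_pos (by omega)]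
  rw [← Finset.mul_prod_erase _ _ (Finset.mem_univ a),
    ← Finset.mul_prod_erase _ _ (Finset.mem_erase.mpr ⟨hab, Finset.mem_univ b⟩)]
  have hrest : ∏ v ∈ (Finset.univ.erase a).erase b, (x - (sgDeg (pathGraph n) v : F))
      = (x - 2) ^ (n - 2) := by
    have hcard : ((Finset.univ.erase a).erase b).card = n - 2 := by
      rw [Finset.card_erase_of_mem (Finset.mem_erase.mpr ⟨hab, Finset.mem_univ b⟩),
        Finset.card_erase_of_mem (Finset.mem_univ a), Finset.card_univ, Fintype.card_fin]
      omega
    rw [← hcard, ← Finset.prod_const]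
    refine Finset.prod_congr rfl fun v hv => ?_
    rw [Finset.mem_erase, Finset.mem_erase] at hv
    have hv1 : (v : ℕ) ≠ n - 1 := fun h => hv.1 (Fin.ext h)
    have hv2 : (v : ℕ) ≠ 0 := fun h => hv.2.1 (Fin.ext h)
    have hdv : sgDeg (pathGraph n) v = 2 := by
      rw [sgDeg_path]
      have := v.isLt
      rw [if_pos (by omega), if_pos (by omega)]
    rw [hdv]
    norm_num
  rw [hrest, hda, hdb]
  push_cast
  ring

end SkewAux

open SkewAux

/-- **Laplacian characteristic polynomial of a skew gain path** (Corollary 2.5).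
For a skew gain graph on the path `P_n` (`n ≥ 2`), the Laplacian characteristic polynomial is
`(x-2)^(n-2) (x-1)² + Σ_M (-1)^{|M|} (Π_{e ∈ M} g(φ(e))) Π_{v ∉ V(M)} (x - d(v))`, the sum
running over all nonempty matchings `M` of `P_n`. -/
theorem skewGainPath_laplacian_charpoly
    [Field F] [CharZero F] (n : ℕ) (hn : 2 ≤ n)
    (f : F → F) (hf0 : f 0 = 0) (hf1 : f 1 = 1)
    (hfmul : ∀ x y : F, f (x * y) = f x * f y) (hfinv : ∀ x : F, f (f x) = x)
    (φ : Fin n → Fin n → F)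
    (hφ0 : ∀ u v, (pathGraph n).Adj u v → φ u v ≠ 0)
    (hφf : ∀ u v, (pathGraph n).Adj u v → φ v u = f (φ u v)) :
    ∀ x : F,
      (x • (1 : Matrix (Fin n) (Fin n) F) - sgLap (pathGraph n) φ).det =
        (x - 2) ^ (n - 2) * (x - 1) ^ 2 +
          ∑ M : Finset (Sym2 (Fin n)),
            if M.Nonempty ∧ IsMatchingSet (pathGraph n) M then
              (-1 : F) ^ M.card * (∏ e ∈ M, sgGainSq φ e) *
                ∏ v ∈ Finset.univ.filter (fun v => ∀ e ∈ M, v ∉ e),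
                  (x - (sgDeg (pathGraph n) v : F))
            else 0 := by
  intro x
  classical
  set G := pathGraph n with hG
  set A := x • (1 : Matrix (Fin n) (Fin n) F) - sgLap G φ with hA
  set w : Finset (Sym2 (Fin n)) → F := fun M =>
    (-1 : F) ^ M.card * (∏ e ∈ M, sgGainSq φ e) *
      ∏ v ∈ Finset.univ.filter (fun v => ∀ e ∈ M, v ∉ e), (x - (sgDeg G v : F)) with hw
  -- Step 1: restrict the Leibniz expansion to permutations supported on edges.
  have step1 : A.det = ∑ σ ∈ Finset.univ.filter
      (fun σ : Equiv.Perm (Fin n) => ∀ i, σ i = i ∨ G.Adj (σ i) i),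
      Equiv.Perm.sign σ • ∏ i, A (σ i) i := by
    rw [Matrix.det_apply]
    symm
    apply Finset.sum_subset (Finset.subset_univ _)
    intro σ _ hσ
    simp only [Finset.mem_filter, Finset.mem_univ, true_and] at hσ
    push_neg at hσ
    obtain ⟨i, hi1, hi2⟩ := hσ
    have hzero : A (σ i) i = 0 := by
      rw [hA, entry_ne G φ x hi1, if_neg hi2]
    have hz : ∏ i : Fin n, A (σ i) i = 0 := Finset.prod_eq_zero (Finset.mem_univ i) hzero
    rw [hz, smul_zero]
  -- Step 2: bijection with matchings.
  have step2 : ∑ σ ∈ Finset.univ.filter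
      (fun σ : Equiv.Perm (Fin n) => ∀ i, σ i = i ∨ G.Adj (σ i) i),
      Equiv.Perm.sign σ • ∏ i, A (σ i) i
      = ∑ M ∈ Finset.univ.filter (fun M => IsMatchingSet G M), w M := by
    refine Finset.sum_bij' (fun σ _ => Mof σ)
      (fun M hM => mPerm M (Finset.mem_filter.mp hM).2.2) ?_ ?_ ?_ ?_ ?_
    · -- maps into matchings
      intro σ hσ
      have hP := (Finset.mem_filter.mp hσ).2
      have hinv := path_invol σ hP
      exact Finset.mem_filter.mpr ⟨Finset.mem_univ _, Mof_edges hP, Mof_PW hinv⟩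
    · -- maps into supported permutations
      intro M hM
      obtain ⟨-, hE, hPW⟩ :
          M ∈ Finset.univ ∧ IsMatchingSet G M := by
        obtain ⟨h1, h2⟩ := Finset.mem_filter.mp hM
        exact ⟨h1, h2⟩
      refine Finset.mem_filter.mpr ⟨Finset.mem_univ _, fun i => ?_⟩
      show mSwap M i = i ∨ G.Adj (mSwap M i) i
      by_cases h : ∀ e ∈ M, i ∉ e
      · exact Or.inl (mSwap_of_forall h)
      · push_neg at h
        obtain ⟨e, he, hie⟩ := h
        right
        have hs : s(i, mSwap M i) = e := mSwap_spec hPW he hie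
        have hmem : s(i, mSwap M i) ∈ G.edgeSet := hs ▸ hE e he
        exact ((SimpleGraph.mem_edgeSet G).mp hmem).symm
    · -- left inverse
      intro σ hσ
      have hP := (Finset.mem_filter.mp hσ).2
      exact mPerm_Mof (path_invol σ hP) _
    · -- right inverse
      intro M hM
      have hE := (Finset.mem_filter.mp hM).2.1
      exact Mof_mPerm _ (fun e he => SimpleGraph.not_isDiag_of_mem_edgeSet G (hE e he))
    · -- weights agree
      intro σ hσ
      have hP := (Finset.mem_filter.mp hσ).2
      have hinv := path_invol σ hP
      have hPW : PW (Mof σ) := Mof_PW hinv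
      have hE := Mof_edges hP
      have hD : ∀ e ∈ Mof σ, ¬e.IsDiag :=
        fun e he => SimpleGraph.not_isDiag_of_mem_edgeSet G (hE e he)
      have hσeq : σ = mPerm (Mof σ) hPW := (mPerm_Mof hinv hPW).symm
      rw [hw]
      conv_lhs => rw [hσeq]
      rw [sign_mPerm _ _ hD, prod_mPerm G φ x hE hPW]
      simp only [Units.smul_def, Units.val_pow_eq_pow_val, Units.val_neg, Units.val_one,
        zsmul_eq_mul, Int.cast_pow, Int.cast_neg, Int.cast_one]
      ring
  -- Step 3: split off the empty matching.
  have hempty : (∅ : Finset (Sym2 (Fin n))) ∈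
      Finset.univ.filter (fun M => IsMatchingSet G M) := by
    refine Finset.mem_filter.mpr ⟨Finset.mem_univ _, ?_, ?_⟩ <;> simp
  have step3 : ∑ M ∈ Finset.univ.filter (fun M => IsMatchingSet G M), w M
      = w ∅ + ∑ M ∈ Finset.univ.filter
          (fun M => M.Nonempty ∧ IsMatchingSet G M), w M := by
    rw [← Finset.add_sum_erase _ _ hempty]
    congr 1
    apply Finset.sum_congr _ (fun _ _ => rfl)
    ext M
    simp only [Finset.mem_erase, Finset.mem_filter, Finset.mem_univ, true_and,
      ← Finset.nonempty_iff_ne_empty]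
  have hwempty : w ∅ = (x - 2) ^ (n - 2) * (x - 1) ^ 2 := by
    rw [hw]
    have hfilter : Finset.univ.filter
        (fun v : Fin n => ∀ e ∈ (∅ : Finset (Sym2 (Fin n))), v ∉ e) = Finset.univ :=
      Finset.filter_true_of_mem (fun v _ => by simp)
    simp only [hfilter, Finset.card_empty, pow_zero, Finset.prod_empty, one_mul, mul_one]
    exact prod_deg hn x
  rw [step1, step2, step3, hwempty]
  congr 1
  rw [Finset.sum_filter]
end

section
/- Let Φ_f = (C_n, F^×, φ, f) be a skew gain graph whose underlying graph is the cycle C_n on n ≥ 3 vertices. Then its Laplacian characteristic polynomial is χ(Φ_f, x) = (x − 2)^n + (−1)^{n−1}(φ(C_n) + f(φ(C_n))) + Σ_M (−1)^{|M|} · (∏_{e ∈ M} g(φ(e))) · ∏_{v ∉ V(M)} (x − 2), where the sum runs over all nonempty matchings M of C_n (sets of pairwise non-incident edges), |M| is the number of edges of M, and V(M) is the set of vertices covered by M. -/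
open scoped Classical
open Matrix Finset SimpleGraph

variable {F V : Type*}

namespace SkewGainAux

variable {m : ℕ}

open Fin.CommRing

lemma two_ne (m : ℕ) : (2 : Fin (m+3)) ≠ 0 := by simp [Fin.ext_iff, Fin.val_two]; rw [Nat.mod_eq_of_lt (by omega)]; omega

lemma add_one_ne (i : Fin (m+3)) : i + 1 ≠ i := by simp [Fin.ext_iff]

lemma sub_one_ne (i : Fin (m+3)) : i - 1 ≠ i := by
  intro h; rw [sub_eq_iff_eq_add] at h
  exact add_one_ne i h.symm

lemma add_two_ne' (i : Fin (m+3)) : i + 2 ≠ i := by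
  intro h
  exact two_ne m (add_left_cancel (a := i) (b := 2) (c := 0) (by rw [h, add_zero]))

lemma add_ne_sub (i : Fin (m+3)) : i + 1 ≠ i - 1 := by
  intro h; rw [eq_sub_iff_add_eq] at h
  have h2 : i + 2 = i := by rw [show i+2 = i+1+1 by ring, h]
  exact add_two_ne' i h2


lemma adj_iff (u v : Fin (m+3)) : (cycleGraph (m+3)).Adj u v ↔ v = u + 1 ∨ u = v + 1 := by
  have h := cycleGraph_adj (n := m+1) (u := u) (v := v)
  rw [h, sub_eq_iff_eq_add, sub_eq_iff_eq_add]
  constructor <;> rintro (h|h) <;> [skip; skip; skip; skip] <;> simp [h, add_comm]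

/-- The candidate involution associated to a set of "starting vertices" of matched edges. -/
def mFun (S : Finset (Fin (m+3))) : Fin (m+3) → Fin (m+3) := fun i =>
  if i ∈ S then i + 1 else if i - 1 ∈ S then i - 1 else i

/-- `S` has no two (cyclically) consecutive elements. -/
def Good (S : Finset (Fin (m+3))) : Prop := ∀ i ∈ S, i + 1 ∉ S

lemma Good.subset {S T : Finset (Fin (m+3))} (h : Good T) (hST : S ⊆ T) : Good S :=
  fun i hi hi1 => h i (hST hi) (hST hi1)

lemma mFun_invol {S : Finset (Fin (m+3))} (hS : Good S) : Function.Involutive (mFun S) := by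
  intro i
  unfold mFun
  by_cases h1 : i ∈ S
  · simp only [h1, if_pos]
    have h2 : i + 1 ∉ S := hS i h1
    simp [h2, h1]
  · simp only [h1, if_neg, if_false]
    by_cases h2 : i - 1 ∈ S
    · have h3 : (i-1) + 1 ∉ S := hS _ h2
      rw [sub_add_cancel] at h3
      simp [h2, h3, sub_sub_cancel]
    · simp [h1, h2]

noncomputable def mPerm (S : Finset (Fin (m+3))) : Equiv.Perm (Fin (m+3)) :=
  if h : Function.Involutive (mFun S) then h.toPerm else 1

lemma mPerm_apply {S : Finset (Fin (m+3))} (hS : Good S) (i : Fin (m+3)) :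
    mPerm S i = mFun S i := by
  rw [mPerm, dif_pos (mFun_invol hS)]
  rfl

lemma mem_iff_mPerm {S : Finset (Fin (m+3))} (hS : Good S) (i : Fin (m+3)) :
    i ∈ S ↔ mPerm S i = i + 1 := by
  rw [mPerm_apply hS]
  unfold mFun
  constructor
  · intro h; simp [h]
  · intro h
    by_contra hi
    rw [if_neg hi] at h
    by_cases h2 : i - 1 ∈ S
    · rw [if_pos h2] at h; exact add_ne_sub i h.symm
    · rw [if_neg h2] at h; exact add_one_ne i h.symm




lemma eq_rot {σ : Equiv.Perm (Fin (m+3))}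
    (hσ : ∀ i, σ i = i ∨ σ i = i + 1 ∨ σ i = i - 1)
    {i : Fin (m+3)} (h0 : σ i = i + 1) (h1 : σ (i+1) = i + 1 + 1) :
    σ = finRotate (m+3) := by
  have key : ∀ k : ℕ, σ (i + (k:Fin (m+3))) = i + (k:Fin (m+3)) + 1 ∧
      σ (i + (k:Fin (m+3)) + 1) = i + (k:Fin (m+3)) + 1 + 1 := by
    intro k
    induction k with
    | zero => simpa using ⟨h0, h1⟩
    | succ k ih =>
      obtain ⟨ha, hb⟩ := ih
      set a := i + (k : Fin (m+3)) with hadef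
      have hcast : (i + ((k+1 : ℕ) : Fin (m+3))) = a + 1 := by push_cast; ring
      rw [hcast]
      refine ⟨hb, ?_⟩
      rcases hσ (a + 1 + 1) with h | h | h
      · exfalso
        have := σ.injective (h.trans hb.symm)
        exact add_one_ne (a+1) this
      · exact h
      · exfalso
        rw [add_sub_cancel_right] at h
        have := σ.injective (h.trans ha.symm)
        have h2 : a + 2 = a := by rw [show a + 2 = a + 1 + 1 by ring, this]
        exact add_two_ne' a h2
  ext j
  have hj : i + ((j - i).val : Fin (m+3)) = j := by
    rw [Fin.cast_val_eq_self]; ring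
  have := (key (j - i).val).1
  rw [hj] at this
  rw [this]
  simp

lemma eq_rot_inv {σ : Equiv.Perm (Fin (m+3))}
    (hσ : ∀ i, σ i = i ∨ σ i = i + 1 ∨ σ i = i - 1)
    {i : Fin (m+3)} (h0 : σ i = i - 1) (h1 : σ (i-1) = i - 1 - 1) :
    σ = (finRotate (m+3))⁻¹ := by
  have hσ' : ∀ j, σ⁻¹ j = j ∨ σ⁻¹ j = j + 1 ∨ σ⁻¹ j = j - 1 := by
    intro j
    rcases hσ (σ⁻¹ j) with h | h | h
    · left
      rw [Equiv.Perm.inv_def, Equiv.apply_symm_apply] at h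
      exact h.symm
    · right; right
      rw [Equiv.Perm.inv_def, Equiv.apply_symm_apply] at h
      rw [eq_sub_iff_add_eq]
      exact h.symm
    · right; left
      rw [Equiv.Perm.inv_def, Equiv.apply_symm_apply] at h
      have h2 := h.symm
      rw [sub_eq_iff_eq_add] at h2
      exact h2
  have e0 : σ⁻¹ (i - 1 - 1) = (i - 1 - 1) + 1 := by
    rw [sub_add_cancel, ← h1, Equiv.Perm.inv_def, Equiv.symm_apply_apply]
  have e1 : σ⁻¹ ((i - 1 - 1) + 1) = (i - 1 - 1) + 1 + 1 := by
    rw [sub_add_cancel, sub_add_cancel, ← h0, Equiv.Perm.inv_def, Equiv.symm_apply_apply]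
  have := eq_rot hσ' e0 e1
  rw [← this, inv_inv]

lemma classify {σ : Equiv.Perm (Fin (m+3))}
    (hσ : ∀ i, σ i = i ∨ σ i = i + 1 ∨ σ i = i - 1)
    (hr : σ ≠ finRotate (m+3)) (hr' : σ ≠ (finRotate (m+3))⁻¹) :
    Good (univ.filter fun i => σ i = i + 1) ∧
      σ = mPerm (univ.filter fun i => σ i = i + 1) := by
  have claim1 : ∀ i, σ i = i + 1 → σ (i+1) = i := by
    intro i hi
    rcases hσ (i+1) with h | h | h
    · exact absurd (σ.injective (h.trans hi.symm)) (add_one_ne i)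
    · exact absurd (eq_rot hσ hi h) hr
    · rwa [add_sub_cancel_right] at h
  have claim2 : ∀ i, σ i = i - 1 → σ (i-1) = i := by
    intro i hi
    rcases hσ (i-1) with h | h | h
    · exact absurd (σ.injective (h.trans hi.symm)) (sub_one_ne i)
    · rwa [sub_add_cancel] at h
    · exact absurd (eq_rot_inv hσ hi h) hr'
  have hG : Good (univ.filter fun i => σ i = i + 1) := by
    intro i hi hi1
    rw [mem_filter] at hi hi1
    have h1 := claim1 i hi.2
    rw [hi1.2] at h1
    exact add_two_ne' i (by rw [show i + 2 = i + 1 + 1 by ring, h1])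
  refine ⟨hG, ?_⟩
  apply Equiv.ext
  intro j
  rw [mPerm_apply hG]
  unfold mFun
  by_cases h1 : j ∈ univ.filter fun i => σ i = i + 1
  · rw [if_pos h1]; exact (mem_filter.mp h1).2
  · rw [if_neg h1]
    by_cases h2 : j - 1 ∈ univ.filter fun i => σ i = i + 1
    · rw [if_pos h2]
      have := claim1 _ (mem_filter.mp h2).2
      rwa [sub_add_cancel] at this
    · rw [if_neg h2]
      rcases hσ j with h | h | h
      · exact h
      · have hmem : j ∈ univ.filter fun i => σ i = i + 1 := mem_filter.mpr ⟨mem_univ j, h⟩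
        exact absurd hmem h1
      · exfalso
        have h3 := claim2 j h
        exact h2 (mem_filter.mpr ⟨mem_univ _, by rw [sub_add_cancel]; exact h3⟩)

lemma mPerm_sq {S : Finset (Fin (m+3))} (hS : Good S) (i : Fin (m+3)) :
    mPerm S (mPerm S i) = i := by
  rw [mPerm_apply hS, mPerm_apply hS]
  exact mFun_invol hS i

lemma rot_sq_zero : finRotate (m+3) (finRotate (m+3) (0 : Fin (m+3))) ≠ 0 := by
  simp only [finRotate_succ_apply, zero_add]
  intro h
  exact two_ne m (by rw [← h]; norm_num)

lemma rot_ne_inv : finRotate (m+3) ≠ (finRotate (m+3))⁻¹ := by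
  intro h
  apply rot_sq_zero (m := m)
  nth_rewrite 2 [h]
  exact Equiv.apply_symm_apply _ _

lemma mPerm_ne_rot {S : Finset (Fin (m+3))} (hS : Good S) : mPerm S ≠ finRotate (m+3) := by
  intro h
  apply rot_sq_zero (m := m)
  rw [← h]
  exact mPerm_sq hS 0

lemma mPerm_ne_rot_inv {S : Finset (Fin (m+3))} (hS : Good S) :
    mPerm S ≠ (finRotate (m+3))⁻¹ := by
  intro h
  apply rot_sq_zero (m := m)
  have h2 : (finRotate (m+3))⁻¹ ((finRotate (m+3))⁻¹ (0 : Fin (m+3))) = 0 := by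
    rw [← h]; exact mPerm_sq hS 0
  have h3 := congrArg (fun t => finRotate (m+3) (finRotate (m+3) t)) h2
  simpa using h3.symm

lemma mPerm_empty : mPerm (∅ : Finset (Fin (m+3))) = 1 := by
  apply Equiv.ext
  intro i
  rw [mPerm_apply (by intro i hi; simp at hi)]
  simp [mFun]

lemma mPerm_inj {S T : Finset (Fin (m+3))} (hS : Good S) (hT : Good T)
    (h : mPerm S = mPerm T) : S = T := by
  ext i
  rw [mem_iff_mPerm hS, mem_iff_mPerm hT, h]

lemma mPerm_insert {a : Fin (m+3)} {s : Finset (Fin (m+3))} (ha : a ∉ s)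
    (hG : Good (insert a s)) :
    mPerm (insert a s) = Equiv.swap a (a+1) * mPerm s := by
  have hGs : Good s := hG.subset (subset_insert a s)
  have ha1 : a + 1 ∉ insert a s := hG a (mem_insert_self a s)
  have ha1s : a + 1 ∉ s := fun h => ha1 (mem_insert_of_mem h)
  have ham : a - 1 ∉ s := by
    intro h
    exact absurd (mem_insert_self a s)
      (by simpa [sub_add_cancel] using hG (a-1) (mem_insert_of_mem h))
  apply Equiv.ext
  intro i
  rw [mPerm_apply hG]
  simp only [Equiv.Perm.mul_apply]
  rw [mPerm_apply hGs]
  by_cases h1 : i = a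
  · subst h1
    rw [mFun, if_pos (mem_insert_self i s), mFun, if_neg ha, if_neg ham,
      Equiv.swap_apply_left]
  · by_cases h2 : i = a + 1
    · subst h2
      rw [mFun, if_neg ha1, if_pos (by simpa [add_sub_cancel_right] using mem_insert_self a s),
        mFun, if_neg ha1s, if_neg (by simpa [add_sub_cancel_right] using ha),
        Equiv.swap_apply_right, add_sub_cancel_right]
    · by_cases h3 : i ∈ s
      · have hins : i ∈ insert a s := mem_insert_of_mem h3
        rw [mFun, if_pos hins, mFun, if_pos h3, Equiv.swap_apply_of_ne_of_ne]
        · intro h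
          have : a - 1 ∈ s := by rwa [← h, add_sub_cancel_right]
          exact ham this
        · intro h
          exact h1 (add_left_injective 1 h)
      · have hins : i ∉ insert a s := by simp [h1, h3]
        by_cases h4 : i - 1 ∈ s
        · have h4' : i - 1 ∈ insert a s := mem_insert_of_mem h4
          rw [mFun, if_neg hins, if_pos h4', mFun, if_neg h3, if_pos h4,
            Equiv.swap_apply_of_ne_of_ne]
          · intro h
            apply h2
            rw [← h, sub_add_cancel]
          · intro h
            apply ha1s
            rwa [show a + 1 = i - 1 from h.symm]
        · have h4' : i - 1 ∉ insert a s := by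
            simp only [mem_insert, h4, or_false]
            intro h
            apply h2
            rw [← h, sub_add_cancel]
          rw [mFun, if_neg hins, if_neg h4', mFun, if_neg h3, if_neg h4,
            Equiv.swap_apply_of_ne_of_ne h1 h2]

lemma sign_mPerm {S : Finset (Fin (m+3))} (hS : Good S) :
    Equiv.Perm.sign (mPerm S) = (-1) ^ S.card := by
  classical
  induction S using Finset.induction_on with
  | empty => simp [mPerm_empty]
  | @insert a s ha ih =>
    rw [mPerm_insert ha hS, Equiv.Perm.sign_mul, Equiv.Perm.sign_swap (add_one_ne a).symm,
      ih (hS.subset (subset_insert a s)), card_insert_of_notMem ha, pow_succ]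
    rw [mul_comm]


def edgeFun (j : Fin (m+3)) : Sym2 (Fin (m+3)) := s(j, j+1)

lemma edgeFun_inj : Function.Injective (edgeFun (m := m)) := by
  intro i j h
  rw [edgeFun, edgeFun, Sym2.eq_iff] at h
  rcases h with ⟨h1, _⟩ | ⟨h1, h2⟩
  · exact h1
  · exfalso
    rw [← h2] at h1
    exact add_two_ne' i (by rw [show i + 2 = i + 1 + 1 by ring, ← h1])

lemma adj_edge (j : Fin (m+3)) : (cycleGraph (m+3)).Adj j (j+1) :=
  (adj_iff j (j+1)).mpr (Or.inl rfl)

lemma edge_char {e : Sym2 (Fin (m+3))} (he : e ∈ (cycleGraph (m+3)).edgeSet) :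
    ∃ j, e = edgeFun j := by
  induction e with
  | _ u v =>
    rw [SimpleGraph.mem_edgeSet, adj_iff] at he
    rcases he with h | h
    · exact ⟨u, by rw [edgeFun, h]⟩
    · exact ⟨v, by rw [edgeFun, ← h, Sym2.eq_swap]⟩

def covered (S : Finset (Fin (m+3))) : Finset (Fin (m+3)) := S ∪ S.image (· + 1)

lemma mem_covered {S : Finset (Fin (m+3))} {v : Fin (m+3)} :
    v ∈ covered S ↔ v ∈ S ∨ v - 1 ∈ S := by
  rw [covered, mem_union, mem_image]
  constructor
  · rintro (h | ⟨j, hj, rfl⟩)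
    · exact Or.inl h
    · exact Or.inr (by rwa [add_sub_cancel_right])
  · rintro (h | h)
    · exact Or.inl h
    · exact Or.inr ⟨v - 1, h, sub_add_cancel v 1⟩

lemma matching_iff {M : Finset (Sym2 (Fin (m+3)))} :
    (M.Nonempty ∧ IsMatchingSet (cycleGraph (m+3)) M) ↔
      ∃ S : Finset (Fin (m+3)), Good S ∧ S ≠ ∅ ∧ M = S.image edgeFun := by
  constructor
  · rintro ⟨hne, hedge, hmat⟩
    refine ⟨univ.filter (fun j => edgeFun j ∈ M), ?_, ?_, ?_⟩
    · intro j hj hj1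
      rw [mem_filter] at hj hj1
      refine hmat _ hj.2 _ hj1.2 (fun h => add_one_ne j (edgeFun_inj h).symm) (j+1) ⟨?_, ?_⟩
      · rw [edgeFun, Sym2.mem_iff]; right; rfl
      · rw [edgeFun, Sym2.mem_iff]; left; rfl
    · obtain ⟨e, he⟩ := hne
      obtain ⟨j, rfl⟩ := edge_char (hedge e he)
      intro h
      have : j ∈ univ.filter (fun j => edgeFun j ∈ M) := mem_filter.mpr ⟨mem_univ _, he⟩
      rw [h] at this
      simp at this
    · ext e
      rw [mem_image]
      constructor
      · intro he
        obtain ⟨j, rfl⟩ := edge_char (hedge e he)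
        exact ⟨j, mem_filter.mpr ⟨mem_univ _, he⟩, rfl⟩
      · rintro ⟨j, hj, rfl⟩
        exact (mem_filter.mp hj).2
  · rintro ⟨S, hG, hne, rfl⟩
    refine ⟨?_, ?_, ?_⟩
    · obtain ⟨j, hj⟩ := nonempty_iff_ne_empty.mpr hne
      exact ⟨edgeFun j, mem_image_of_mem _ hj⟩
    · intro e he
      obtain ⟨j, _, rfl⟩ := mem_image.mp he
      exact SimpleGraph.mem_edgeSet _ |>.mpr (adj_edge j)
    · intro e he e' he' hee v hv
      obtain ⟨i, hi, rfl⟩ := mem_image.mp he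
      obtain ⟨j, hj, rfl⟩ := mem_image.mp he'
      have hij : i ≠ j := fun h => hee (by rw [h])
      obtain ⟨hv1, hv2⟩ := hv
      rw [edgeFun, Sym2.mem_iff] at hv1 hv2
      rcases hv1 with rfl | rfl <;> rcases hv2 with h | h
      · exact hij h
      · exact hG j hj (h ▸ hi)
      · exact hG i hi (h ▸ hj)
      · exact hij (add_left_injective 1 h)

lemma uncovered_eq (S : Finset (Fin (m+3))) :
    univ.filter (fun v => ∀ e ∈ S.image edgeFun, v ∉ e) = (covered S)ᶜ := by
  ext v
  rw [mem_filter, mem_compl, mem_covered]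
  simp only [mem_univ, true_and, mem_image]
  constructor
  · intro h
    push_neg
    constructor
    · intro hv
      exact h _ ⟨v, hv, rfl⟩ (by rw [edgeFun, Sym2.mem_iff]; left; rfl)
    · intro hv
      exact h _ ⟨v - 1, hv, rfl⟩
        (by rw [edgeFun, Sym2.mem_iff, sub_add_cancel]; right; rfl)
  · intro h
    push_neg at h
    rintro e ⟨j, hj, rfl⟩ hv
    rw [edgeFun, Sym2.mem_iff] at hv
    rcases hv with rfl | rfl
    · exact h.1 hj
    · exact h.2 (by rwa [add_sub_cancel_right])


variable {F : Type*} [Field F]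

/-- The matrix `(x-2)I + A` with `y = x-2` on the diagonal. -/
noncomputable def cmat (y : F) (φ : Fin (m+3) → Fin (m+3) → F) :
    Matrix (Fin (m+3)) (Fin (m+3)) F :=
  Matrix.of fun i j => if i = j then y else if (cycleGraph (m+3)).Adj i j then φ i j else 0

lemma cmat_diag (y : F) (φ : Fin (m+3) → Fin (m+3) → F) (i : Fin (m+3)) :
    cmat y φ i i = y := by simp [cmat]

lemma cmat_adj (y : F) (φ : Fin (m+3) → Fin (m+3) → F) {i j : Fin (m+3)}
    (hne : i ≠ j) (h : (cycleGraph (m+3)).Adj i j) : cmat y φ i j = φ i j := by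
  simp [cmat, hne, h]

lemma cmat_succ (y : F) (φ : Fin (m+3) → Fin (m+3) → F) (i : Fin (m+3)) :
    cmat y φ (i+1) i = φ (i+1) i :=
  cmat_adj y φ (add_one_ne i) ((adj_iff _ _).mpr (Or.inr rfl))

lemma cmat_pred (y : F) (φ : Fin (m+3) → Fin (m+3) → F) (i : Fin (m+3)) :
    cmat y φ i (i+1) = φ i (i+1) :=
  cmat_adj y φ (fun h => add_one_ne i h.symm) (adj_edge i)

lemma cmat_rot_prod (y : F) (φ : Fin (m+3) → Fin (m+3) → F) :
    ∏ i, cmat y φ (finRotate (m+3) i) i = ∏ i, φ (i+1) i := by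
  apply Finset.prod_congr rfl
  intro i _
  rw [finRotate_succ_apply, cmat_succ]

lemma rot_inv_apply (i : Fin (m+3)) : (finRotate (m+3))⁻¹ i = i - 1 := by
  rw [Equiv.Perm.inv_def, Equiv.symm_apply_eq, finRotate_succ_apply, sub_add_cancel]

lemma cmat_rot_inv_prod (y : F) (φ : Fin (m+3) → Fin (m+3) → F) :
    ∏ i, cmat y φ ((finRotate (m+3))⁻¹ i) i = ∏ i, φ i (i+1) := by
  have h1 : ∀ i : Fin (m+3), cmat y φ ((finRotate (m+3))⁻¹ i) i = φ (i-1) i := by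
    intro i
    rw [rot_inv_apply]
    apply cmat_adj y φ (sub_one_ne i)
    rw [adj_iff]
    left
    rw [sub_add_cancel]
  rw [Finset.prod_congr rfl (fun i _ => h1 i)]
  have := Equiv.prod_comp (Equiv.addRight (1 : Fin (m+3))) (fun i => φ (i - 1) i)
  rw [← this]
  apply Finset.prod_congr rfl
  intro i _
  simp [add_sub_cancel_right]

lemma covered_disj (S : Finset (Fin (m+3))) (hS : Good S) :
    Disjoint S (S.image (· + 1)) := by
  rw [Finset.disjoint_left]
  rintro a ha hb
  obtain ⟨j, hj, rfl⟩ := mem_image.mp hb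
  exact hS j hj ha

lemma cmat_mPerm_prod (y : F) (φ : Fin (m+3) → Fin (m+3) → F) {S : Finset (Fin (m+3))}
    (hS : Good S) :
    ∏ i, cmat y φ (mPerm S i) i =
      (∏ j ∈ S, (φ j (j+1) * φ (j+1) j)) * ∏ _v ∈ (covered S)ᶜ, y := by
  have hdisj := covered_disj S hS
  rw [← Finset.prod_mul_prod_compl (covered S) (fun i => cmat y φ (mPerm S i) i)]
  congr 1
  · rw [covered, Finset.prod_union hdisj]
    have h1 : ∀ i ∈ S, cmat y φ (mPerm S i) i = φ (i+1) i := by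
      intro i hi
      rw [mPerm_apply hS, mFun, if_pos hi, cmat_succ]
    have h2 : ∀ i ∈ S.image (· + 1), cmat y φ (mPerm S i) i = φ (i-1) i := by
      intro i hi
      obtain ⟨j, hj, rfl⟩ := mem_image.mp hi
      have hj1 : j + 1 ∉ S := hS j hj
      rw [mPerm_apply hS, mFun, if_neg hj1, if_pos (by rwa [add_sub_cancel_right]),
        add_sub_cancel_right]
      exact cmat_pred y φ j
    rw [Finset.prod_congr rfl h1, Finset.prod_congr rfl h2, Finset.prod_image
      (fun a _ b _ h => add_left_injective 1 h)]
    rw [← Finset.prod_mul_distrib]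
    apply Finset.prod_congr rfl
    intro j _
    rw [add_sub_cancel_right]
    ring
  · apply Finset.prod_congr rfl
    intro i hi
    rw [mem_compl, mem_covered] at hi
    push_neg at hi
    rw [mPerm_apply hS, mFun, if_neg hi.1, if_neg hi.2, cmat_diag]

lemma f_prod {f : F → F} (hf1 : f 1 = 1) (hfmul : ∀ x y : F, f (x * y) = f x * f y)
    {α : Type*} (s : Finset α) (g : α → F) :
    f (∏ i ∈ s, g i) = ∏ i ∈ s, f (g i) := by
  classical
  induction s using Finset.induction_on with
  | empty => simpa using hf1
  | @insert a t ha ih => rw [Finset.prod_insert ha, Finset.prod_insert ha, hfmul, ih]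


end SkewGainAux

open SkewGainAux in
/-- **Laplacian characteristic polynomial of a skew gain cycle** (Corollary 2.6).
For a skew gain graph on the cycle `C_n` with `n = m + 3 ≥ 3` vertices (vertices `Fin n` in
cyclic order, so that `φ(C_n) = Π_i φ(i, i+1)`), the Laplacian characteristic polynomial is
`(x-2)^n + (-1)^(n-1) (φ(C_n) + f(φ(C_n)))
  + Σ_M (-1)^{|M|} (Π_{e ∈ M} g(φ(e))) Π_{v ∉ V(M)} (x - 2)`,
the sum running over all nonempty matchings `M` of `C_n`. -/
theorem skewGainCycle_laplacian_charpoly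
    [Field F] [CharZero F] (m : ℕ)
    (f : F → F) (hf0 : f 0 = 0) (hf1 : f 1 = 1)
    (hfmul : ∀ x y : F, f (x * y) = f x * f y) (hfinv : ∀ x : F, f (f x) = x)
    (φ : Fin (m + 3) → Fin (m + 3) → F)
    (hφ0 : ∀ u v, (cycleGraph (m + 3)).Adj u v → φ u v ≠ 0)
    (hφf : ∀ u v, (cycleGraph (m + 3)).Adj u v → φ v u = f (φ u v)) :
    ∀ x : F,
      (x • (1 : Matrix (Fin (m + 3)) (Fin (m + 3)) F) - sgLap (cycleGraph (m + 3)) φ).det =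
        (x - 2) ^ (m + 3) +
          (-1 : F) ^ (m + 3 - 1) *
            ((∏ i : Fin (m + 3), φ i (i + 1)) + f (∏ i : Fin (m + 3), φ i (i + 1))) +
          ∑ M : Finset (Sym2 (Fin (m + 3))),
            if M.Nonempty ∧ IsMatchingSet (cycleGraph (m + 3)) M then
              (-1 : F) ^ M.card * (∏ e ∈ M, sgGainSq φ e) *
                ∏ v ∈ Finset.univ.filter (fun v => ∀ e ∈ M, v ∉ e), (x - 2)
            else 0 := by
  intro x
  -- Step 1: the matrix is `cmat (x-2) φ`.
  have hmat : x • (1 : Matrix (Fin (m + 3)) (Fin (m + 3)) F) - sgLap (cycleGraph (m + 3)) φ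
      = cmat (x - 2) φ := by
    have hdeg : ∀ i : Fin (m+3), (sgDeg (cycleGraph (m+3)) i : F) = 2 := by
      intro i
      have h2 : sgDeg (cycleGraph (m+3)) i = (cycleGraph (m+3)).degree i := by
        rw [sgDeg, SimpleGraph.degree]
        congr 1
        ext u; simp [SimpleGraph.mem_neighborFinset]
      rw [h2, cycleGraph_degree_three_le]
      norm_num
    ext i j
    by_cases h : i = j
    · subst h
      simp [sgLap, sgAdj, cmat, Matrix.sub_apply, Matrix.one_apply, hdeg i]
    · simp [sgLap, sgAdj, cmat, Matrix.sub_apply, Matrix.one_apply, h,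
        (Ne.symm h), Matrix.diagonal_apply_ne _ h]
  rw [hmat, Matrix.det_apply']
  set y := x - 2 with hy
  -- the local predicate
  set Pred : Equiv.Perm (Fin (m+3)) → Prop :=
    fun σ => ∀ i, σ i = i ∨ σ i = i + 1 ∨ σ i = i - 1 with hPred
  have hadj_char : ∀ (σ : Equiv.Perm (Fin (m+3))) i,
      (cycleGraph (m+3)).Adj (σ i) i ↔ (σ i = i + 1 ∨ σ i = i - 1) := by
    intro σ i
    rw [adj_iff]
    constructor
    · rintro (h | h)
      · right; rw [eq_sub_iff_add_eq, ← h]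
      · left; exact h
    · rintro (h | h)
      · right; exact h
      · left; rw [h, sub_add_cancel]
  -- Step 2: restrict the Leibniz sum
  have hzero : ∀ σ ∈ (univ : Finset (Equiv.Perm (Fin (m+3)))),
      σ ∉ univ.filter Pred →
      (((Equiv.Perm.sign σ : ℤ) : F) * ∏ i, cmat y φ (σ i) i) = 0 := by
    intro σ _ hσ
    have hnp : ¬ Pred σ := fun hp => hσ (mem_filter.mpr ⟨mem_univ _, hp⟩)
    have hnp' : ¬ ∀ i, σ i = i ∨ σ i = i + 1 ∨ σ i = i - 1 := hnp
    push_neg at hnp'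
    obtain ⟨i, hi1, hi2, hi3⟩ := hnp'
    have hent : cmat y φ (σ i) i = 0 := by
      rw [cmat, Matrix.of_apply, if_neg hi1, if_neg]
      rw [hadj_char]
      push_neg
      exact ⟨hi2, hi3⟩
    exact mul_eq_zero_of_right _ (Finset.prod_eq_zero (mem_univ i) hent)
  rw [← Finset.sum_subset (Finset.filter_subset Pred univ) hzero]
  -- Step 3: classify the permutations
  have hfilter : univ.filter Pred =
      insert (finRotate (m+3)) (insert (finRotate (m+3))⁻¹
        ((univ.filter Good).image mPerm)) := by
    ext σ
    simp only [mem_filter, mem_univ, true_and, mem_insert, mem_image]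
    constructor
    · intro hσ
      by_cases h1 : σ = finRotate (m+3)
      · exact Or.inl h1
      by_cases h2 : σ = (finRotate (m+3))⁻¹
      · exact Or.inr (Or.inl h2)
      obtain ⟨hG, hEq⟩ := classify hσ h1 h2
      exact Or.inr (Or.inr ⟨_, hG, hEq.symm⟩)
    · rintro (rfl | rfl | ⟨S, hS, rfl⟩)
      · intro i; right; left; rw [finRotate_succ_apply]
      · intro i; right; right; rw [rot_inv_apply]
      · intro i
        rw [mPerm_apply hS, mFun]
        by_cases h1 : i ∈ S
        · right; left; rw [if_pos h1]
        · rw [if_neg h1]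
          by_cases h2 : i - 1 ∈ S
          · right; right; rw [if_pos h2]
          · left; rw [if_neg h2]
  rw [hfilter]
  have hnot1 : finRotate (m+3) ∉ insert (finRotate (m+3))⁻¹
      ((univ.filter Good).image mPerm) := by
    simp only [mem_insert, mem_image, not_or]
    refine ⟨rot_ne_inv, ?_⟩
    push_neg
    intro S hS
    exact fun h => mPerm_ne_rot (mem_filter.mp hS).2 h
  have hnot2 : (finRotate (m+3))⁻¹ ∉ (univ.filter Good).image mPerm := by
    simp only [mem_image]
    push_neg
    intro S hS
    exact fun h => mPerm_ne_rot_inv (mem_filter.mp hS).2 h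
  rw [Finset.sum_insert hnot1, Finset.sum_insert hnot2,
    Finset.sum_image (fun S hS T hT h => mPerm_inj (mem_filter.mp hS).2 (mem_filter.mp hT).2 h)]
  have hmem0 : (∅ : Finset (Fin (m+3))) ∈ univ.filter Good :=
    mem_filter.mpr ⟨mem_univ _, by intro i hi; simp at hi⟩
  rw [← Finset.add_sum_erase _ _ hmem0]
  have hcast : ∀ k : ℕ, ((((-1:ℤˣ)^k : ℤˣ) : ℤ) : F) = (-1:F)^k := by
    intro k
    simp
  have hsub : m + 3 - 1 = m + 2 := rfl
  -- rotation terms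
  have hrot_term : ((Equiv.Perm.sign (finRotate (m+3)) : ℤ) : F) *
      ∏ i, cmat y φ (finRotate (m+3) i) i
      = (-1:F)^(m+3-1) * f (∏ i : Fin (m+3), φ i (i + 1)) := by
    rw [cmat_rot_prod, sign_finRotate, hsub, hcast]
    congr 1
    rw [f_prod hf1 hfmul]
    exact (Finset.prod_congr rfl fun i _ => (hφf i (i+1) (adj_edge i)).symm).symm
  have hrotinv_term : ((Equiv.Perm.sign ((finRotate (m+3))⁻¹) : ℤ) : F) *
      ∏ i, cmat y φ ((finRotate (m+3))⁻¹ i) i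
      = (-1:F)^(m+3-1) * ∏ i : Fin (m+3), φ i (i + 1) := by
    rw [cmat_rot_inv_prod, Equiv.Perm.sign_inv, sign_finRotate, hsub, hcast]
  have hempty_term : ((Equiv.Perm.sign (mPerm (∅ : Finset (Fin (m+3)))) : ℤ) : F) *
      ∏ i, cmat y φ (mPerm ∅ i) i = y ^ (m+3) := by
    rw [mPerm_empty]
    simp only [Equiv.Perm.sign_one, Equiv.Perm.one_apply, cmat_diag, Units.val_one,
      Int.cast_one, one_mul, Finset.prod_const, Finset.card_univ, Fintype.card_fin]
  -- the matching sum
  have hRHS : (∑ M : Finset (Sym2 (Fin (m+3))),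
      if M.Nonempty ∧ IsMatchingSet (cycleGraph (m+3)) M then
        (-1:F)^M.card * (∏ e ∈ M, sgGainSq φ e) *
          ∏ v ∈ univ.filter (fun v => ∀ e ∈ M, v ∉ e), y
      else 0)
      = ∑ S ∈ (univ.filter Good).erase ∅,
        ((Equiv.Perm.sign (mPerm S) : ℤ) : F) * ∏ i, cmat y φ (mPerm S i) i := by
    rw [← Finset.sum_filter]
    have hset : (univ.filter fun M => M.Nonempty ∧ IsMatchingSet (cycleGraph (m+3)) M)
        = ((univ.filter Good).erase ∅).image (fun S => S.image edgeFun) := by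
      ext M
      simp only [mem_filter, mem_univ, true_and, mem_image, mem_erase]
      rw [matching_iff]
      constructor
      · rintro ⟨S, hG, hne, rfl⟩
        exact ⟨S, ⟨hne, hG⟩, rfl⟩
      · rintro ⟨S, ⟨hne, hS⟩, rfl⟩
        exact ⟨S, hS, hne, rfl⟩
    rw [hset, Finset.sum_image (fun S hS T hT h => Finset.image_injective edgeFun_inj h)]
    apply Finset.sum_congr rfl
    intro S hS
    have hG : Good S := (mem_filter.mp (mem_of_mem_erase hS)).2
    rw [cmat_mPerm_prod y φ hG, sign_mPerm hG, hcast,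
      Finset.card_image_of_injective _ edgeFun_inj, uncovered_eq S,
      Finset.prod_image (fun a _ b _ h => edgeFun_inj h)]
    have hgain : ∀ j : Fin (m+3), sgGainSq φ (edgeFun j) = φ j (j+1) * φ (j+1) j := by
      intro j
      rfl
    rw [Finset.prod_congr rfl (fun j _ => hgain j)]
    ring
  rw [hRHS, hrot_term, hrotinv_term, hempty_term]
  ring
end

section
/- Let Φ_f = (K_{1,n}, F^×, φ, f) be a skew gain graph whose underlying graph is the star K_{1,n} (one center adjacent to n leaves, n ≥ 1). Then its Laplacian characteristic polynomial is χ(Φ_f, x) = (x − 1)^n (x − n) − (x − 1)^{n−1} · Σ_{e ∈ E(K_{1,n})} g(φ(e)). -/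
open scoped Classical
open Matrix Finset SimpleGraph

variable {F V : Type*}

@[simp] lemma cbgAdj {A B : Type*} (u v : A ⊕ B) :
    (completeBipartiteGraph A B).Adj u v ↔
      (u.isLeft ∧ v.isRight ∨ u.isRight ∧ v.isLeft) := Iff.rfl

/-- **Laplacian characteristic polynomial of a skew gain star** (Corollary 2.7).
For a skew gain graph on the star `K_{1,n}` (modelled as the complete bipartite graph with
parts `Fin 1` and `Fin n`, the single vertex being the center), the Laplacian characteristic
polynomial is `(x-1)^n (x-n) - (x-1)^(n-1) Σ_{e ∈ E} g(φ(e))`, where `g(y) = y * f(y)`. -/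

theorem skewGainStar_laplacian_charpoly
    [Field F] [CharZero F] (n : ℕ) (hn : 1 ≤ n)
    (f : F → F) (hf0 : f 0 = 0) (hf1 : f 1 = 1)
    (hfmul : ∀ x y : F, f (x * y) = f x * f y) (hfinv : ∀ x : F, f (f x) = x)
    (φ : (Fin 1 ⊕ Fin n) → (Fin 1 ⊕ Fin n) → F)
    (hφ0 : ∀ u v, (completeBipartiteGraph (Fin 1) (Fin n)).Adj u v → φ u v ≠ 0)
    (hφf : ∀ u v, (completeBipartiteGraph (Fin 1) (Fin n)).Adj u v → φ v u = f (φ u v)) :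
    ∀ x : F,
      (x • (1 : Matrix (Fin 1 ⊕ Fin n) (Fin 1 ⊕ Fin n) F) -
          sgLap (completeBipartiteGraph (Fin 1) (Fin n)) φ).det =
        (x - 1) ^ n * (x - (n : F)) -
          (x - 1) ^ (n - 1) *
            ∑ j : Fin n, φ (Sum.inl 0) (Sum.inr j) * f (φ (Sum.inl 0) (Sum.inr j)) := by
  classical
  set a : Fin n → F := fun j => φ (Sum.inl 0) (Sum.inr j) with ha
  set c : Fin n → F := fun j => φ (Sum.inr j) (Sum.inl 0) with hc
  have hac : ∀ j : Fin n, c j = f (a j) := by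
    intro j
    exact hφf (Sum.inl 0) (Sum.inr j) (by simp)
  have hdeg1 : sgDeg (completeBipartiteGraph (Fin 1) (Fin n)) (Sum.inl (0 : Fin 1)) = n := by
    simp only [sgDeg]
    rw [Finset.card_filter, Fintype.sum_sum_type]
    simp
  have hdeg2 : ∀ j : Fin n, sgDeg (completeBipartiteGraph (Fin 1) (Fin n)) (Sum.inr j) = 1 := by
    intro j
    simp only [sgDeg]
    rw [Finset.card_filter, Fintype.sum_sum_type]
    simp
  have hblock : ∀ x : F,
      x • (1 : Matrix (Fin 1 ⊕ Fin n) (Fin 1 ⊕ Fin n) F) - sgLap (completeBipartiteGraph (Fin 1) (Fin n)) φ =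
      Matrix.fromBlocks (Matrix.of fun _ _ => x - (n : F)) (Matrix.of fun _ j => a j)
        (Matrix.of fun i _ => c i) ((x - 1) • (1 : Matrix (Fin n) (Fin n) F)) := by
    intro x
    ext i j
    rcases i with i | i <;> rcases j with j | j
    · have hi : i = 0 := Subsingleton.elim _ _
      have hj : j = 0 := Subsingleton.elim _ _
      subst hi; subst hj
      simp [sgLap, sgAdj, Matrix.one_apply, hdeg1, cbgAdj]
    · have hi : i = 0 := Subsingleton.elim _ _
      subst hi
      simp [sgLap, sgAdj, Matrix.one_apply, ha, cbgAdj]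
    · have hj : j = 0 := Subsingleton.elim _ _
      subst hj
      simp [sgLap, sgAdj, Matrix.one_apply, hc, cbgAdj]
    · rcases eq_or_ne i j with h | h <;>
        simp [sgLap, sgAdj, Matrix.one_apply, hdeg2, h, Matrix.smul_apply, cbgAdj]
  set S : F := ∑ j : Fin n, a j * c j with hS
  have key : ∀ x : F, x ≠ 1 →
      (x • (1 : Matrix (Fin 1 ⊕ Fin n) (Fin 1 ⊕ Fin n) F) - sgLap (completeBipartiteGraph (Fin 1) (Fin n)) φ).det =
        (x - 1) ^ n * (x - (n : F)) - (x - 1) ^ (n - 1) * S := by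
    intro x hx
    have hx' : x - 1 ≠ 0 := sub_ne_zero.mpr hx
    rw [hblock]
    haveI : Invertible ((x - 1) • (1 : Matrix (Fin n) (Fin n) F)) := by
      apply Matrix.invertibleOfIsUnitDet
      rw [Matrix.det_smul, Matrix.det_one, mul_one]
      exact (isUnit_iff_ne_zero.mpr (pow_ne_zero _ hx'))
    have hinv : ⅟((x - 1) • (1 : Matrix (Fin n) (Fin n) F)) = (x - 1)⁻¹ • 1 := by
      apply invOf_eq_right_inv
      rw [Matrix.smul_mul, Matrix.mul_smul, Matrix.one_mul, smul_smul,
        mul_inv_cancel₀ hx', one_smul]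
    rw [Matrix.det_fromBlocks₂₂ (Matrix.of fun _ _ => x - (n : F)) (Matrix.of fun _ j => a j)
      (Matrix.of fun i _ => c i) ((x - 1) • (1 : Matrix (Fin n) (Fin n) F))]
    rw [hinv]
    have hD : Matrix.det ((x - 1) • (1 : Matrix (Fin n) (Fin n) F)) = (x - 1) ^ n := by
      rw [Matrix.det_smul, Matrix.det_one, mul_one, Fintype.card_fin]
    rw [hD]
    have h11 : ((Matrix.of fun _ _ => x - (n : F) : Matrix (Fin 1) (Fin 1) F) -
        (Matrix.of fun _ j => a j : Matrix (Fin 1) (Fin n) F) *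
          ((x - 1)⁻¹ • (1 : Matrix (Fin n) (Fin n) F)) *
          (Matrix.of fun i _ => c i : Matrix (Fin n) (Fin 1) F)).det
        = (x - (n : F)) - (x - 1)⁻¹ * S := by
      rw [Matrix.det_fin_one]
      have hmul : ((Matrix.of fun _ j => a j : Matrix (Fin 1) (Fin n) F) *
          ((x - 1)⁻¹ • (1 : Matrix (Fin n) (Fin n) F)) *
          (Matrix.of fun i _ => c i : Matrix (Fin n) (Fin 1) F)) 0 0 = (x - 1)⁻¹ * S := by
        simp only [Matrix.mul_apply, Matrix.smul_apply, Matrix.one_apply, Matrix.of_apply,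
          smul_eq_mul, mul_ite, mul_one, mul_zero, hS, Finset.mul_sum]
        refine Finset.sum_congr rfl fun j _ => ?_
        rw [Finset.sum_ite_eq' Finset.univ j fun k => a k * (x - 1)⁻¹]
        simp [mul_comm, mul_assoc, mul_left_comm]
      rw [Matrix.sub_apply, hmul, Matrix.of_apply]
    rw [h11]
    obtain ⟨m, rfl⟩ : ∃ m, n = m + 1 := ⟨n - 1, (Nat.succ_pred_eq_of_pos hn).symm⟩
    have hpow : (x - 1) ^ (m + 1) * (x - 1)⁻¹ = (x - 1) ^ m := by
      rw [pow_succ, mul_assoc, mul_inv_cancel₀ hx', mul_one]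
    simp only [Nat.add_sub_cancel]
    rw [mul_sub, ← mul_assoc, hpow]
  -- now extend to all x by a polynomial argument
  set L := sgLap (completeBipartiteGraph (Fin 1) (Fin n)) φ with hL
  set p : Polynomial F :=
    ((Polynomial.X : Polynomial F) • 1 - L.map Polynomial.C).det with hp
  set q : Polynomial F :=
    (Polynomial.X - 1) ^ n * (Polynomial.X - Polynomial.C (n : F)) -
      (Polynomial.X - 1) ^ (n - 1) * Polynomial.C S with hq
  have hpe : ∀ x : F, Polynomial.eval x p = (x • (1 : Matrix (Fin 1 ⊕ Fin n) (Fin 1 ⊕ Fin n) F) - L).det := by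
    intro x
    rw [hp, ← Polynomial.coe_evalRingHom, RingHom.map_det]
    congr 1
    ext i j
    simp [Matrix.map_apply, Matrix.one_apply, apply_ite]
  have hqe : ∀ x : F, Polynomial.eval x q =
      (x - 1) ^ n * (x - (n : F)) - (x - 1) ^ (n - 1) * S := by
    intro x; simp [hq]
  have hpq : p = q := by
    apply Polynomial.eq_of_infinite_eval_eq
    have hinf : Set.Infinite ({1}ᶜ : Set F) :=
      Set.Finite.infinite_compl (Set.finite_singleton 1)
    refine hinf.mono ?_
    intro x hx
    simp only [Set.mem_compl_iff, Set.mem_singleton_iff] at hx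
    simp only [Set.mem_setOf_eq]
    rw [hpe, hqe]
    exact key x hx
  intro x
  have := hpe x
  rw [hpq, hqe] at this
  rw [← this]
  congr 2
  refine Finset.sum_congr rfl fun j _ => ?_
  rw [hac j]
end

section
/- Assume F is algebraically closed of characteristic zero. Let Φ_f = (K_{m,m}, F^×, φ, f) be a skew gain graph whose underlying graph is the complete bipartite graph K_{m,m} with parts {u_1, …, u_m} and {w_1, …, w_m}, and let B be the m×m matrix with (i, j)-entry φ(u_i, w_j), so that the adjacency matrix of Φ_f is the block matrix A(Φ_f) = [[0, B], [(B^f)^T, 0]], where B^f is obtained from B by applying f entrywise. Then μ ∈ F is an eigenvalue of the Laplacian matrix L(Φ_f) = mI − A(Φ_f) if and only if (m − μ)² is an eigenvalue of B·(B^f)^T. -/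
open scoped Classical
open Matrix Finset SimpleGraph

variable {F V : Type*}

/-- **Laplacian eigenvalues of skew gain graphs on `K_{m,m}`** (Theorem 2.10).
Let `Φ_f` be a skew gain graph on the complete bipartite graph `K_{m,m}` and let `B` be the
`m × m` matrix of skew gains from the first part to the second, `B^f` its entrywise image
under `f`.  Over an algebraically closed field, `μ` is an eigenvalue of the Laplacian
`L(Φ_f)` if and only if `(m - μ)²` is an eigenvalue of `B * (B^f)ᵀ`. -/
theorem skewGainCompleteBipartite_laplacian_eigenvalues
    [Field F] [CharZero F] [IsAlgClosed F] (m : ℕ)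
    (f : F → F) (hf0 : f 0 = 0) (hf1 : f 1 = 1)
    (hfmul : ∀ x y : F, f (x * y) = f x * f y) (hfinv : ∀ x : F, f (f x) = x)
    (φ : (Fin m ⊕ Fin m) → (Fin m ⊕ Fin m) → F)
    (hφ0 : ∀ u v, (completeBipartiteGraph (Fin m) (Fin m)).Adj u v → φ u v ≠ 0)
    (hφf : ∀ u v, (completeBipartiteGraph (Fin m) (Fin m)).Adj u v → φ v u = f (φ u v))
    (B Bf : Matrix (Fin m) (Fin m) F)
    (hB : ∀ i j, B i j = φ (Sum.inl i) (Sum.inr j))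
    (hBf : ∀ i j, Bf i j = if B i j ≠ 0 then f (B i j) else 0) :
    ∀ μ : F,
      (∃ y : (Fin m ⊕ Fin m) → F, y ≠ 0 ∧
          (sgLap (completeBipartiteGraph (Fin m) (Fin m)) φ).mulVec y = μ • y) ↔
        (∃ z : Fin m → F, z ≠ 0 ∧
          (B * Bf.transpose).mulVec z = ((m : F) - μ) ^ 2 • z) := by
  intro μ
  set G := completeBipartiteGraph (Fin m) (Fin m) with hG
  set ν := (m : F) - μ with hν
  have hadj : ∀ (i j : Fin m), G.Adj (Sum.inl i) (Sum.inr j) := by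
    intro i j; simp [hG]
  have hnadjL : ∀ (i i' : Fin m), ¬ G.Adj (Sum.inl i) (Sum.inl i') := by
    intro i i'; simp [hG]
  have hnadjR : ∀ (j j' : Fin m), ¬ G.Adj (Sum.inr j) (Sum.inr j') := by
    intro j j'; simp [hG]
  have hadj' : ∀ (j i : Fin m), G.Adj (Sum.inr j) (Sum.inl i) := by
    intro j i; exact (hadj i j).symm
  have hdegL : ∀ i : Fin m, sgDeg G (Sum.inl i) = m := by
    intro i
    unfold sgDeg
    have h : (Finset.univ.filter fun u => G.Adj (Sum.inl i) u) =
        Finset.univ.image Sum.inr := by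
      ext u; cases u <;> simp [hG]
    rw [h, Finset.card_image_of_injective _ Sum.inr_injective, Finset.card_univ,
      Fintype.card_fin]
  have hdegR : ∀ j : Fin m, sgDeg G (Sum.inr j) = m := by
    intro j
    unfold sgDeg
    have h : (Finset.univ.filter fun u => G.Adj (Sum.inr j) u) =
        Finset.univ.image Sum.inl := by
      ext u; cases u <;> simp [hG]
    rw [h, Finset.card_image_of_injective _ Sum.inl_injective, Finset.card_univ,
      Fintype.card_fin]
  have hBf' : ∀ i j, Bf i j = φ (Sum.inr j) (Sum.inl i) := by
    intro i j
    rw [hBf, if_pos, hB, ← hφf _ _ (hadj i j)]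
    rw [hB]; exact hφ0 _ _ (hadj i j)
  -- characterization of the Laplacian eigen-equation
  have key : ∀ y : (Fin m ⊕ Fin m) → F,
      (sgLap G φ).mulVec y = μ • y ↔
        ((∀ i, ∑ j, B i j * y (Sum.inr j) = ν * y (Sum.inl i)) ∧
         (∀ j, ∑ i, Bf i j * y (Sum.inl i) = ν * y (Sum.inr j))) := by
    intro y
    have hL : ∀ v, (sgLap G φ).mulVec y v =
        (sgDeg G v : F) * y v - ∑ u, (if G.Adj v u then φ v u else 0) * y u := by
      intro v
      rw [sgLap, Matrix.sub_mulVec, Pi.sub_apply, Matrix.mulVec_diagonal]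
      congr 1
    have hAl : ∀ i : Fin m,
        (∑ u, (if G.Adj (Sum.inl i) u then φ (Sum.inl i) u else 0) * y u)
          = ∑ j, B i j * y (Sum.inr j) := by
      intro i
      rw [Fintype.sum_sum_type]
      have e0 : ∀ a : Fin m,
          (if G.Adj (Sum.inl i) (Sum.inl a) then φ (Sum.inl i) (Sum.inl a) else 0)
            * y (Sum.inl a) = 0 := by
        intro a; rw [if_neg (hnadjL i a), zero_mul]
      rw [Finset.sum_congr rfl (fun a _ => e0 a), Finset.sum_const_zero, zero_add]
      refine Finset.sum_congr rfl fun j _ => ?_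
      rw [if_pos (hadj i j), hB]
    have hAr : ∀ j : Fin m,
        (∑ u, (if G.Adj (Sum.inr j) u then φ (Sum.inr j) u else 0) * y u)
          = ∑ i, Bf i j * y (Sum.inl i) := by
      intro j
      rw [Fintype.sum_sum_type]
      have e0 : ∀ a : Fin m,
          (if G.Adj (Sum.inr j) (Sum.inr a) then φ (Sum.inr j) (Sum.inr a) else 0)
            * y (Sum.inr a) = 0 := by
        intro a; rw [if_neg (hnadjR j a), zero_mul]
      rw [Finset.sum_congr rfl (fun a _ => e0 a), Finset.sum_const_zero, add_zero]
      refine Finset.sum_congr rfl fun i _ => ?_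
      rw [if_pos (hadj' j i), hBf']
    rw [funext_iff]
    constructor
    · intro h
      constructor
      · intro i
        have hi := h (Sum.inl i)
        rw [hL, hAl, hdegL i] at hi
        simp only [Pi.smul_apply, smul_eq_mul] at hi
        rw [hν]
        linear_combination -hi
      · intro j
        have hj := h (Sum.inr j)
        rw [hL, hAr, hdegR j] at hj
        simp only [Pi.smul_apply, smul_eq_mul] at hj
        rw [hν]
        linear_combination -hj
    · rintro ⟨h1, h2⟩ v
      cases v with
      | inl i =>
        rw [hL, hAl, hdegL i, h1 i]
        simp only [Pi.smul_apply, smul_eq_mul]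
        rw [hν]; ring
      | inr j =>
        rw [hL, hAr, hdegR j, h2 j]
        simp only [Pi.smul_apply, smul_eq_mul]
        rw [hν]; ring
  constructor
  · rintro ⟨y, hy0, hyL⟩
    obtain ⟨h1, h2⟩ := (key y).mp hyL
    by_cases ha : (fun i => y (Sum.inl i)) = 0
    · -- left part is zero
      have hb : ∃ j, y (Sum.inr j) ≠ 0 := by
        by_contra hc
        push_neg at hc
        apply hy0
        funext v
        cases v with
        | inl i => exact congrFun ha i
        | inr j => exact hc j
      obtain ⟨j0, hj0⟩ := hb
      have hν0 : ν = 0 := by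
        have h2' := h2 j0
        have hzz : ∑ i, Bf i j0 * y (Sum.inl i) = 0 := by
          refine Finset.sum_eq_zero fun i _ => ?_
          rw [show y (Sum.inl i) = 0 from congrFun ha i, mul_zero]
        rw [hzz] at h2'
        exact (mul_eq_zero.mp h2'.symm).resolve_right hj0
      have hdetB : B.det = 0 := by
        rw [← Matrix.exists_mulVec_eq_zero_iff]
        refine ⟨fun j => y (Sum.inr j), ?_, ?_⟩
        · intro hc; exact hj0 (congrFun hc j0)
        · funext i
          have h1' := h1 i
          rw [hν0, zero_mul] at h1'
          simpa [Matrix.mulVec, dotProduct] using h1'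
      have hdet : (B * Bf.transpose).det = 0 := by
        rw [Matrix.det_mul, hdetB, zero_mul]
      obtain ⟨z, hz0, hz⟩ := (Matrix.exists_mulVec_eq_zero_iff).mpr hdet
      exact ⟨z, hz0, by rw [hz, hν0]; simp⟩
    · refine ⟨fun i => y (Sum.inl i), ha, ?_⟩
      have hBfv : Bf.transpose.mulVec (fun i => y (Sum.inl i)) =
          fun j => ν * y (Sum.inr j) := by
        funext j
        simpa [Matrix.mulVec, dotProduct, Matrix.transpose_apply] using h2 j
      rw [← Matrix.mulVec_mulVec, hBfv]
      funext i
      have e : B.mulVec (fun j => ν * y (Sum.inr j)) i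
          = ν * ∑ j, B i j * y (Sum.inr j) := by
        simp only [Matrix.mulVec, dotProduct, Finset.mul_sum]
        refine Finset.sum_congr rfl fun j _ => by ring
      rw [e, h1 i]
      simp only [Pi.smul_apply, smul_eq_mul]
      ring
  · rintro ⟨z, hz0, hz⟩
    by_cases hν0 : ν = 0
    · rw [hν0] at hz
      simp only [ne_eq, OfNat.ofNat_ne_zero, not_false_eq_true, zero_pow, zero_smul] at hz
      by_cases hw : Bf.transpose.mulVec z = 0
      · refine ⟨Sum.elim z 0, ?_, ?_⟩
        · intro hc
          exact hz0 (funext fun i => congrFun hc (Sum.inl i))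
        · rw [key]
          constructor
          · intro i; simp [hν0]
          · intro j
            have e : ∑ i, Bf i j * z i = Bf.transpose.mulVec z j := by
              simp [Matrix.mulVec, dotProduct, Matrix.transpose_apply]
            simp only [Sum.elim_inl, Sum.elim_inr, Pi.zero_apply]
            rw [e, hw]
            simp [hν0]
      · refine ⟨Sum.elim 0 (Bf.transpose.mulVec z), ?_, ?_⟩
        · intro hc
          exact hw (funext fun j => congrFun hc (Sum.inr j))
        · rw [key]
          constructor
          · intro i
            simp only [Sum.elim_inl, Sum.elim_inr, Pi.zero_apply, mul_zero]
            have e : ∑ j, B i j * Bf.transpose.mulVec z j = (B * Bf.transpose).mulVec z i := by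
              rw [← Matrix.mulVec_mulVec]
              simp [Matrix.mulVec, dotProduct]
            rw [e, hz]
            simp
          · intro j; simp [hν0]
    · refine ⟨Sum.elim (fun i => ν * z i) (Bf.transpose.mulVec z), ?_, ?_⟩
      · intro hc
        apply hz0
        funext i
        have hci := congrFun hc (Sum.inl i)
        simp only [Sum.elim_inl, Pi.zero_apply] at hci
        exact (mul_eq_zero.mp hci).resolve_left hν0
      · rw [key]
        constructor
        · intro i
          simp only [Sum.elim_inl, Sum.elim_inr]
          have e : ∑ j, B i j * Bf.transpose.mulVec z j = (B * Bf.transpose).mulVec z i := by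
            rw [← Matrix.mulVec_mulVec]
            simp [Matrix.mulVec, dotProduct]
          rw [e, hz]
          simp only [Pi.smul_apply, smul_eq_mul]
          ring
        · intro j
          simp only [Sum.elim_inl, Sum.elim_inr]
          have e : ∑ i, Bf i j * (ν * z i) = ν * Bf.transpose.mulVec z j := by
            simp only [Matrix.mulVec, dotProduct, Matrix.transpose_apply,
              Finset.mul_sum]
            refine Finset.sum_congr rfl fun i _ => by ring
          rw [e]
end

section
/- Let Φ_f = (K_{1,n}, F^×, φ, f) be a skew gain graph whose underlying graph is the star K_{1,n} (one center adjacent to n leaves, n ≥ 1). Then det(L(Φ_f)) = n − Σ_{e ∈ E(K_{1,n})} g(φ(e)), where the integer n is cast into F. -/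
open scoped Classical
open Matrix Finset SimpleGraph

variable {F V : Type*}

lemma sgDeg_star_left (n : ℕ) (i : Fin 1) :
    sgDeg (completeBipartiteGraph (Fin 1) (Fin n)) (Sum.inl i) = n := by
  unfold sgDeg
  have h : (Finset.univ.filter fun u : Fin 1 ⊕ Fin n =>
      (completeBipartiteGraph (Fin 1) (Fin n)).Adj (Sum.inl i) u)
      = Finset.univ.image Sum.inr := by
    ext u; cases u <;> simp
  rw [h, Finset.card_image_of_injective _ Sum.inr_injective, Finset.card_univ, Fintype.card_fin]

lemma sgDeg_star_right (n : ℕ) (j : Fin n) :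
    sgDeg (completeBipartiteGraph (Fin 1) (Fin n)) (Sum.inr j) = 1 := by
  unfold sgDeg
  have h : (Finset.univ.filter fun u : Fin 1 ⊕ Fin n =>
      (completeBipartiteGraph (Fin 1) (Fin n)).Adj (Sum.inr j) u)
      = Finset.univ.image Sum.inl := by
    ext u
    cases u with
    | inl a => simp [Subsingleton.elim a 0]
    | inr b => simp
  rw [h, Finset.card_image_of_injective _ Sum.inl_injective, Finset.card_univ, Fintype.card_fin]

/-- **Determinant of the Laplacian of a skew gain star** (Theorem 2.11).
For a skew gain graph on the star `K_{1,n}` (modelled as the complete bipartite graph with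
parts `Fin 1` and `Fin n`, the single vertex being the center),
`det L(Φ_f) = n - Σ_{e ∈ E} g(φ(e))`, where `g(y) = y * f(y)`. -/
theorem skewGainStar_laplacian_det
    [Field F] [CharZero F] (n : ℕ) (hn : 1 ≤ n)
    (f : F → F) (hf0 : f 0 = 0) (hf1 : f 1 = 1)
    (hfmul : ∀ x y : F, f (x * y) = f x * f y) (hfinv : ∀ x : F, f (f x) = x)
    (φ : (Fin 1 ⊕ Fin n) → (Fin 1 ⊕ Fin n) → F)
    (hφ0 : ∀ u v, (completeBipartiteGraph (Fin 1) (Fin n)).Adj u v → φ u v ≠ 0)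
    (hφf : ∀ u v, (completeBipartiteGraph (Fin 1) (Fin n)).Adj u v → φ v u = f (φ u v)) :
    (sgLap (completeBipartiteGraph (Fin 1) (Fin n)) φ).det =
      (n : F) - ∑ j : Fin n, φ (Sum.inl 0) (Sum.inr j) * f (φ (Sum.inl 0) (Sum.inr j)) := by
  have hadj : ∀ (i : Fin 1) (j : Fin n),
      (completeBipartiteGraph (Fin 1) (Fin n)).Adj (Sum.inl i) (Sum.inr j) := by
    intro i j; simp
  have hL : sgLap (completeBipartiteGraph (Fin 1) (Fin n)) φ =
      Matrix.fromBlocks (Matrix.of fun _ _ : Fin 1 => (n : F))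
        (Matrix.of fun (_ : Fin 1) (j : Fin n) => -(φ (Sum.inl 0) (Sum.inr j)))
        (Matrix.of fun (j : Fin n) (_ : Fin 1) => -(f (φ (Sum.inl 0) (Sum.inr j)))) 1 := by
    ext u v
    rcases u with i | j <;> rcases v with i' | j'
    · have : i = i' := Subsingleton.elim _ _
      subst this
      simp [sgLap, sgAdj, Matrix.diagonal, sgDeg_star_left]
    · have : i = 0 := Subsingleton.elim _ _
      subst this
      simp [sgLap, sgAdj, Matrix.diagonal, hadj 0 j']
    · have : i' = 0 := Subsingleton.elim _ _
      subst this
      have := hφf _ _ (hadj 0 j)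
      simp [sgLap, sgAdj, Matrix.diagonal, hadj 0 j, (completeBipartiteGraph (Fin 1) (Fin n)).adj_symm (hadj 0 j), this]
    · by_cases h : j = j'
      · subst h
        simp [sgLap, sgAdj, Matrix.diagonal, sgDeg_star_right, Matrix.one_apply]
      · simp [sgLap, sgAdj, Matrix.diagonal, h, Matrix.one_apply]
  rw [hL, Matrix.det_fromBlocks_one₂₂]
  rw [Matrix.det_unique]
  simp [Matrix.mul_apply, Finset.mul_sum]
end

section
/- Let Φ_f = (K_{1,n}, F^×, φ, f) be a skew gain graph whose underlying graph is the star K_{1,n} (one center adjacent to n leaves, n ≥ 1), and suppose δ ∈ F satisfies δ² = (n+1)² − 4·det(L(Φ_f)). Then the characteristic polynomial of L(Φ_f) factors as det(xI − L(Φ_f)) = (x − 1)^{n−1} · (x − (n+1+δ)/2) · (x − (n+1−δ)/2); that is, the Laplacian spectrum of Φ_f consists of (n+1+δ)/2 and (n+1−δ)/2 each with multiplicity 1, and 1 with multiplicity n−1. -/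
open scoped Classical
open Matrix Finset SimpleGraph

variable {F V : Type*}

section Aux

variable [Field F]

/-- Block determinant computation for a "star-shaped" matrix with nonzero `d`. -/
lemma star_block_det (n : ℕ) (a d : F) (hd : d ≠ 0) (b c : Fin n → F) :
    (Matrix.fromBlocks (Matrix.of fun (_ : Fin 1) (_ : Fin 1) => a)
        (Matrix.of fun (_ : Fin 1) j => b j)
        (Matrix.of fun i (_ : Fin 1) => c i)
        (d • (1 : Matrix (Fin n) (Fin n) F))).det =
      d ^ n * (a - (∑ j, b j * c j) / d) := by
  have h1 : (d • (1 : Matrix (Fin n) (Fin n) F)) * (d⁻¹ • 1) = 1 := by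
    rw [Matrix.smul_mul, Matrix.one_mul, smul_smul, mul_inv_cancel₀ hd, one_smul]
  have h2 : (d⁻¹ • (1 : Matrix (Fin n) (Fin n) F)) * (d • 1) = 1 := by
    rw [Matrix.smul_mul, Matrix.one_mul, smul_smul, inv_mul_cancel₀ hd, one_smul]
  haveI : Invertible (d • (1 : Matrix (Fin n) (Fin n) F)) := ⟨d⁻¹ • 1, h2, h1⟩
  have hinv : ⅟ (d • (1 : Matrix (Fin n) (Fin n) F)) = d⁻¹ • 1 :=
    invOf_eq_right_inv h1
  rw [Matrix.det_fromBlocks₂₂, hinv]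
  have hdet : (d • (1 : Matrix (Fin n) (Fin n) F)).det = d ^ n := by
    simp [Matrix.det_smul]
  rw [hdet]
  congr 1
  rw [Matrix.det_fin_one]
  simp [Matrix.mul_apply, Matrix.one_apply, Finset.mul_sum, div_eq_mul_inv,
    Finset.sum_mul]
  ring_nf

end Aux

/-- **Laplacian spectrum of a skew gain star** (Theorem 2.12).
For a skew gain graph on the star `K_{1,n}` (modelled as the complete bipartite graph with
parts `Fin 1` and `Fin n`, the single vertex being the center), if `δ` is a square root of
`(n+1)² - 4 det L(Φ_f)`, then the Laplacian characteristic polynomial factors as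
`(x-1)^(n-1) (x - (n+1+δ)/2) (x - (n+1-δ)/2)`; that is, the Laplacian spectrum consists of
`(n+1+δ)/2` and `(n+1-δ)/2` with multiplicity `1` each and `1` with multiplicity `n-1`. -/
theorem skewGainStar_laplacian_spectrum
    [Field F] [CharZero F] (n : ℕ) (hn : 1 ≤ n)
    (f : F → F) (hf0 : f 0 = 0) (hf1 : f 1 = 1)
    (hfmul : ∀ x y : F, f (x * y) = f x * f y) (hfinv : ∀ x : F, f (f x) = x)
    (φ : (Fin 1 ⊕ Fin n) → (Fin 1 ⊕ Fin n) → F)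
    (hφ0 : ∀ u v, (completeBipartiteGraph (Fin 1) (Fin n)).Adj u v → φ u v ≠ 0)
    (hφf : ∀ u v, (completeBipartiteGraph (Fin 1) (Fin n)).Adj u v → φ v u = f (φ u v))
    (δ : F)
    (hδ : δ ^ 2 = ((n : F) + 1) ^ 2 -
      4 * (sgLap (completeBipartiteGraph (Fin 1) (Fin n)) φ).det) :
    ∀ x : F,
      (x • (1 : Matrix (Fin 1 ⊕ Fin n) (Fin 1 ⊕ Fin n) F) -
          sgLap (completeBipartiteGraph (Fin 1) (Fin n)) φ).det =
        (x - 1) ^ (n - 1) * (x - ((n : F) + 1 + δ) / 2) * (x - ((n : F) + 1 - δ) / 2) := by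
  obtain ⟨m, rfl⟩ : ∃ m, n = m + 1 := ⟨n - 1, (Nat.succ_pred_eq_of_pos hn).symm⟩
  set G := completeBipartiteGraph (Fin 1) (Fin (m + 1)) with hG
  set L := sgLap G φ with hL
  set S : F := ∑ j : Fin (m + 1), φ (Sum.inl 0) (Sum.inr j) * φ (Sum.inr j) (Sum.inl 0)
    with hS
  -- degrees
  have hdegc : sgDeg G (Sum.inl 0) = m + 1 := by
    rw [sgDeg, Finset.card_filter, Fintype.sum_sum_type]
    simp [hG]
  have hdegl : ∀ i : Fin (m + 1), sgDeg G (Sum.inr i) = 1 := by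
    intro i
    rw [sgDeg, Finset.card_filter, Fintype.sum_sum_type]
    simp [hG]
  -- block structure
  have hM : ∀ x : F, x • (1 : Matrix (Fin 1 ⊕ Fin (m + 1)) (Fin 1 ⊕ Fin (m + 1)) F) - L =
      Matrix.fromBlocks (Matrix.of fun (_ : Fin 1) (_ : Fin 1) => x - ((m + 1 : ℕ) : F))
        (Matrix.of fun (_ : Fin 1) j => φ (Sum.inl 0) (Sum.inr j))
        (Matrix.of fun i (_ : Fin 1) => φ (Sum.inr i) (Sum.inl 0))
        ((x - 1) • (1 : Matrix (Fin (m + 1)) (Fin (m + 1)) F)) := by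
    intro x
    ext i j
    rcases i with i | i <;> rcases j with j | j
    · obtain rfl : i = 0 := Subsingleton.elim _ _
      obtain rfl : j = 0 := Subsingleton.elim _ _
      simp [hL, sgLap, sgAdj, hG, Matrix.sub_apply, Matrix.smul_apply, Matrix.one_apply,
        Matrix.diagonal_apply, hdegc]
      rw [← hG]; exact_mod_cast hdegc
    · obtain rfl : i = 0 := Subsingleton.elim _ _
      simp [hL, sgLap, sgAdj, hG, Matrix.sub_apply, Matrix.smul_apply, Matrix.one_apply,
        Matrix.diagonal_apply]
    · obtain rfl : j = 0 := Subsingleton.elim _ _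
      simp [hL, sgLap, sgAdj, hG, Matrix.sub_apply, Matrix.smul_apply, Matrix.one_apply,
        Matrix.diagonal_apply]
    · by_cases h : i = j
      · subst h
        simp [hL, sgLap, sgAdj, hG, Matrix.sub_apply, Matrix.smul_apply, Matrix.one_apply,
          Matrix.diagonal_apply, hdegl]
        exact hdegl i
      · simp [hL, sgLap, sgAdj, hG, Matrix.sub_apply, Matrix.smul_apply, Matrix.one_apply,
          Matrix.diagonal_apply, h, Sum.inr.injEq]
  -- key formula for x ≠ 1
  have key : ∀ x : F, x ≠ 1 →
      (x • (1 : Matrix (Fin 1 ⊕ Fin (m + 1)) (Fin 1 ⊕ Fin (m + 1)) F) - L).det =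
      (x - 1) ^ m * ((x - ((m + 1 : ℕ) : F)) * (x - 1) - S) := by
    intro x hx
    have hd : x - 1 ≠ 0 := sub_ne_zero.mpr hx
    rw [hM x, star_block_det (m + 1) _ _ hd]
    rw [hS]
    field_simp
    ring
  -- extend to all x via polynomials
  have keyAll : ∀ x : F,
      (x • (1 : Matrix (Fin 1 ⊕ Fin (m + 1)) (Fin 1 ⊕ Fin (m + 1)) F) - L).det =
      (x - 1) ^ m * ((x - ((m + 1 : ℕ) : F)) * (x - 1) - S) := by
    set p : Polynomial F :=
      ((Polynomial.X : Polynomial F) • 1 - L.map Polynomial.C).det with hp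
    set q : Polynomial F := (Polynomial.X - 1) ^ m *
      ((Polynomial.X - Polynomial.C ((m + 1 : ℕ) : F)) * (Polynomial.X - 1) -
        Polynomial.C S) with hq
    have heval : ∀ x : F, p.eval x =
        (x • (1 : Matrix (Fin 1 ⊕ Fin (m + 1)) (Fin 1 ⊕ Fin (m + 1)) F) - L).det := by
      intro x
      have h := RingHom.map_det (Polynomial.evalRingHom x)
        ((Polynomial.X : Polynomial F) • 1 - L.map Polynomial.C)
      rw [hp]
      rw [show ((Polynomial.X : Polynomial F) • 1 - L.map Polynomial.C).det.eval x =
        (Polynomial.evalRingHom x) ((Polynomial.X : Polynomial F) • 1 -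
          L.map Polynomial.C).det from rfl, h]
      congr 1
      ext i j
      simp [Matrix.map_apply, Matrix.sub_apply, Matrix.smul_apply, Matrix.one_apply,
        apply_ite]
    have hqeval : ∀ x : F, q.eval x =
        (x - 1) ^ m * ((x - ((m + 1 : ℕ) : F)) * (x - 1) - S) := by
      intro x; simp [hq]
    have hpq : p = q := by
      apply Polynomial.eq_of_infinite_eval_eq
      have hinf : ({x : F | x ≠ 1}).Infinite :=
        Set.Finite.infinite_compl (Set.finite_singleton 1)
      apply hinf.mono
      intro x hx
      simp only [Set.mem_setOf_eq] at hx ⊢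
      rw [heval x, hqeval x, key x hx]
    intro x
    rw [← heval x, hpq, hqeval x]
  -- determinant of L
  have hdetL : L.det = ((m + 1 : ℕ) : F) - S := by
    have h0 := keyAll 0
    rw [zero_smul, zero_sub, Matrix.det_neg] at h0
    simp only [Fintype.card_sum, Fintype.card_fin] at h0
    have h0' : (-1 : F) ^ (1 + (m + 1)) * L.det = (-1) ^ m * (((m + 1 : ℕ) : F) - S) := by
      rw [h0]; ring_nf
    have hpow : (-1 : F) ^ (1 + (m + 1)) = (-1) ^ m := by
      rw [show 1 + (m + 1) = m + 2 from by ring, pow_add]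
      norm_num
    rw [hpow] at h0'
    exact mul_left_cancel₀ (pow_ne_zero _ (by norm_num : (-1 : F) ≠ 0)) h0'
  -- finish
  intro x
  rw [keyAll x]
  have hfac : (x - ((m + 1 : ℕ) : F)) * (x - 1) - S =
      (x - (((m + 1 : ℕ) : F) + 1 + δ) / 2) * (x - (((m + 1 : ℕ) : F) + 1 - δ) / 2) := by
    have h4 : 4 * L.det = (((m + 1 : ℕ) : F) + 1) ^ 2 - δ ^ 2 := by linear_combination hδ
    linear_combination -hdetL + h4 / 4
  rw [show (m + 1 : ℕ) - 1 = m from rfl, hfac]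
  ring
end

section
/- Let Φ_f = (G, F^×, φ, f) be a skew gain graph on a finite simple graph G with a fixed orientation of each edge, and fix for each edge e an element s(e) ∈ F with s(e)² = g(φ(e)). Then L_g(Φ_f) = H(Φ_f) · H^#(Φ_f), where L_g(Φ_f) = D_g(Φ_f) − A(Φ_f) is the g-Laplacian, H(Φ_f) is the incidence matrix, and H^#(Φ_f) is its modified transpose. -/
open scoped Classical
open Matrix Finset

/-- **The g-Laplacian factors through the incidence matrix** (Theorem 3.4):
`L_g(Φ_f) = H(Φ_f) * H^#(Φ_f)`.

Here the underlying graph is described by a finite edge type `E` with tail and head maps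
`t h : E → V` (each edge `e` is oriented from `t e` to `h e`, and distinct edges join distinct
pairs of vertices), `φ` is the skew gain function (with `φ(h e, t e) = f(φ(t e, h e)) ≠ 0`),
`s e` is a fixed square root of `g(φ(e)) = φ(e) f(φ(e))`, `A` is the adjacency matrix,
`Dg` the `g`-degree matrix, `H` the incidence matrix and `Hs = H^#` its modified transpose. -/
theorem skewGain_gLaplacian_eq_incidence_mul
    {F V E : Type*} [Field F] [CharZero F] [Fintype V] [DecidableEq V]
    [Fintype E] [DecidableEq E]
    (f : F → F) (hf0 : f 0 = 0) (hf1 : f 1 = 1)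
    (hfmul : ∀ x y : F, f (x * y) = f x * f y) (hfinv : ∀ x : F, f (f x) = x)
    (t h : E → V) (hth : ∀ e, t e ≠ h e)
    (hsimple : ∀ e e', s(t e, h e) = s(t e', h e') → e = e')
    (φ : V → V → F)
    (hφ0 : ∀ e, φ (t e) (h e) ≠ 0)
    (hφf : ∀ e, φ (h e) (t e) = f (φ (t e) (h e)))
    (s : E → F) (hs : ∀ e, s e ^ 2 = φ (t e) (h e) * f (φ (t e) (h e)))
    (A : Matrix V V F)
    (hA : ∀ u v, A u v =
      if ∃ e, (t e = u ∧ h e = v) ∨ (t e = v ∧ h e = u) then φ u v else 0)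
    (Dg : Matrix V V F)
    (hDg : Dg = Matrix.diagonal fun v =>
      ∑ e ∈ Finset.univ.filter (fun e => t e = v ∨ h e = v), s e)
    (H : Matrix V E F)
    (hH : ∀ v e, H v e =
      if t e = v then φ (t e) (h e) * f (φ (t e) (h e))
      else if h e = v then -(f (φ (t e) (h e)) * s e) else 0)
    (Hs : Matrix E V F)
    (hHs : ∀ e v, Hs e v =
      if t e = v then (s e)⁻¹
      else if h e = v then -(f (φ (t e) (h e)))⁻¹ else 0) :
    Dg - A = H * Hs := by
  have hfne : ∀ e, f (φ (t e) (h e)) ≠ 0 := by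
    intro e hc
    apply hφ0 e
    have h2 := hfinv (φ (t e) (h e))
    rw [hc, hf0] at h2
    exact h2.symm
  have hsne : ∀ e, s e ≠ 0 := by
    intro e hc
    have h2 := hs e
    rw [hc] at h2
    simp at h2
    rcases h2 with h3 | h3
    · exact hφ0 e h3
    · exact hfne e h3
  ext u v
  rw [Matrix.sub_apply, Matrix.mul_apply, hDg, hA]
  by_cases huv : u = v
  · subst huv
    rw [Matrix.diagonal_apply_eq, if_neg, sub_zero]
    · rw [Finset.sum_filter]
      apply Finset.sum_congr rfl
      intro e _
      by_cases ht : t e = u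
      · have hh : ¬ h e = u := fun hc => hth e (ht.trans hc.symm)
        rw [hH, hHs, if_pos ht, if_pos ht, if_pos (Or.inl ht), ← hs e, sq,
          mul_inv_cancel_right₀ (hsne e)]
      · by_cases hh : h e = u
        · rw [hH, hHs, if_neg ht, if_pos hh, if_neg ht, if_pos hh,
            if_pos (Or.inr hh), neg_mul_neg, mul_comm (f _) (s e), mul_assoc,
            mul_inv_cancel₀ (hfne e), mul_one]
        · rw [hH, if_neg ht, if_neg hh, zero_mul, if_neg]
          rintro (hc | hc) <;> [exact ht hc; exact hh hc]
    · rintro ⟨e, ⟨h1, h2⟩ | ⟨h1, h2⟩⟩ <;> exact hth e (h1.trans h2.symm)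
  · rw [Matrix.diagonal_apply_ne _ huv, zero_sub]
    by_cases hex : ∃ e, (t e = u ∧ h e = v) ∨ (t e = v ∧ h e = u)
    · rw [if_pos hex]
      obtain ⟨e0, he0⟩ := hex
      have key : ∀ e, ((t e = u ∧ h e = v) ∨ (t e = v ∧ h e = u)) → e = e0 := by
        intro e he
        apply hsimple
        rcases he with ⟨h1, h2⟩ | ⟨h1, h2⟩ <;>
          rcases he0 with ⟨h3, h4⟩ | ⟨h3, h4⟩ <;>
          rw [h1, h2, h3, h4] <;> first | rfl | exact Sym2.eq_swap
      rw [Finset.sum_eq_single e0]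
      · rcases he0 with ⟨h1, h2⟩ | ⟨h1, h2⟩
        · have hne1 : ¬ t e0 = v := fun hc => huv (h1.symm.trans hc)
          rw [hH, hHs, if_pos h1, if_neg hne1, if_pos h2, mul_neg, mul_assoc,
            mul_inv_cancel₀ (hfne e0), mul_one, h1, h2]
        · have hne1 : ¬ t e0 = u := fun hc => huv (hc.symm.trans h1)
          rw [hH, hHs, if_neg hne1, if_pos h2, if_pos h1, neg_mul,
            mul_inv_cancel_right₀ (hsne e0), ← hφf e0, h1, h2]
      · intro e _ hne
        rw [hH, hHs]
        by_cases h1 : t e = u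
        · by_cases h2 : t e = v
          · exact absurd (h1.symm.trans h2) huv
          · by_cases h3 : h e = v
            · exact absurd (key e (Or.inl ⟨h1, h3⟩)) hne
            · rw [if_neg h2, if_neg h3, mul_zero]
        · by_cases h2 : h e = u
          · by_cases h3 : t e = v
            · exact absurd (key e (Or.inr ⟨h3, h2⟩)) hne
            · by_cases h4 : h e = v
              · exact absurd (h2.symm.trans h4) huv
              · rw [if_neg h3, if_neg h4, mul_zero]
          · rw [if_neg h1, if_neg h2, zero_mul]
      · simp
    · rw [if_neg hex, neg_zero]
      symm
      apply Finset.sum_eq_zero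
      intro e _
      rw [hH, hHs]
      by_cases h1 : t e = u
      · by_cases h2 : t e = v
        · exact absurd (h1.symm.trans h2) huv
        · by_cases h3 : h e = v
          · exact absurd ⟨e, Or.inl ⟨h1, h3⟩⟩ hex
          · rw [if_neg h2, if_neg h3, mul_zero]
      · by_cases h2 : h e = u
        · by_cases h3 : t e = v
          · exact absurd ⟨e, Or.inr ⟨h3, h2⟩⟩ hex
          · by_cases h4 : h e = v
            · exact absurd (h2.symm.trans h4) huv
            · rw [if_neg h3, if_neg h4, mul_zero]
        · rw [if_neg h1, if_neg h2, zero_mul]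
end

section
/- Let Φ_f = (G, F^×, φ, f) be a skew gain graph whose underlying graph G is a tree of order n, and fix for each edge e an element s(e) ∈ F with s(e)² = g(φ(e)). Then det(L_g(Φ_f)) = 0. -/
open scoped Classical
open Matrix Finset SimpleGraph

variable {F V : Type*}

/-- The skew gain `φ(W)` of a walk `W`: the product of the skew gains of its oriented edges. -/
noncomputable def walkGain [Field F] {G : SimpleGraph V} {u v : V} (φ : V → V → F)
    (w : G.Walk u v) : F :=
  (w.darts.map fun d => φ d.fst d.snd).prod

/-- The `g`-degree of a vertex `v`: the sum, over the edges `e` incident to `v`, of the chosen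
square roots `s e` of `g(φ(e))`. -/
noncomputable def sgGDeg [Fintype V] [DecidableEq V] [Field F] (G : SimpleGraph V)
    (s : Sym2 V → F) (v : V) : F :=
  ∑ e ∈ Finset.univ.filter (fun e : Sym2 V => e ∈ G.edgeSet ∧ v ∈ e), s e

/-- The `g`-Laplacian matrix `L_g(Φ_f) = D_g(Φ_f) - A(Φ_f)` of a skew gain graph, relative to
the chosen square roots `s e` of `g(φ(e))`. -/
noncomputable def sgGLap [Fintype V] [DecidableEq V] [Field F] (G : SimpleGraph V)
    (φ : V → V → F) (s : Sym2 V → F) : Matrix V V F :=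
  Matrix.diagonal (sgGDeg G s) - sgAdj G φ

/-- The weight of a walk: the product over its darts of `s(edge)/φ(dart)`. -/
noncomputable def sgWt [Field F] {G : SimpleGraph V} {a b : V} (φ : V → V → F)
    (s : Sym2 V → F) (w : G.Walk a b) : F :=
  (w.darts.map fun d => s s(d.fst, d.snd) / φ d.fst d.snd).prod

lemma sgWt_concat [Field F] {G : SimpleGraph V} {a b c : V} (φ : V → V → F)
    (s : Sym2 V → F) (w : G.Walk a b) (h : G.Adj b c) :
    sgWt φ s (w.concat h) = sgWt φ s w * (s s(b, c) / φ b c) := by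
  simp [sgWt, SimpleGraph.Walk.darts_concat]

lemma sgWt_ne_zero [Field F] {G : SimpleGraph V} {a b : V} (φ : V → V → F)
    (s : Sym2 V → F)
    (hφ0 : ∀ u v, G.Adj u v → φ u v ≠ 0)
    (hs0 : ∀ u v, G.Adj u v → s s(u, v) ≠ 0)
    (w : G.Walk a b) : sgWt φ s w ≠ 0 := by
  unfold sgWt
  apply List.prod_ne_zero
  intro h0
  obtain ⟨d, hd, hd0⟩ := List.mem_map.1 h0
  exact (div_ne_zero (hs0 _ _ d.adj) (hφ0 _ _ d.adj)) hd0

/-- **The g-Laplacian of a skew gain tree is singular** (Theorem 3.7).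
If the underlying graph of a skew gain graph is a tree, then `det L_g(Φ_f) = 0`. -/
theorem skewGainTree_gLaplacian_det
    [Field F] [CharZero F] [Fintype V] [DecidableEq V]
    (G : SimpleGraph V) (htree : G.IsTree)
    (f : F → F) (hf0 : f 0 = 0) (hf1 : f 1 = 1)
    (hfmul : ∀ x y : F, f (x * y) = f x * f y) (hfinv : ∀ x : F, f (f x) = x)
    (φ : V → V → F)
    (hφ0 : ∀ u v, G.Adj u v → φ u v ≠ 0)
    (hφf : ∀ u v, G.Adj u v → φ v u = f (φ u v))
    (s : Sym2 V → F)
    (hs : ∀ u v, G.Adj u v → s s(u, v) ^ 2 = φ u v * f (φ u v)) :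
    (sgGLap G φ s).det = 0 := by
  classical
  have hne : Nonempty V := htree.isConnected.nonempty
  -- f is nonzero on nonzero elements
  have hfne : ∀ x : F, x ≠ 0 → f x ≠ 0 := by
    intro x hx h
    exact hx (by rw [← hfinv x, h, hf0])
  have hs0 : ∀ u v, G.Adj u v → s s(u, v) ≠ 0 := by
    intro u v h hzero
    have h1 : φ u v * f (φ u v) = 0 := by rw [← hs u v h, hzero]; ring
    rcases mul_eq_zero.1 h1 with h2 | h2
    · exact hφ0 u v h h2
    · exact hfne _ (hφ0 u v h) h2
  obtain ⟨r⟩ := hne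
  choose p hp hup using htree.existsUnique_path r
  -- the key dichotomy: paths to adjacent vertices extend one another
  have key : ∀ u v (h : G.Adj u v), p v = (p u).concat h ∨ p u = (p v).concat h.symm := by
    intro u v h
    by_cases hv : v ∈ (p u).support
    · right
      have hq : ((p u).takeUntil v hv) = p v := hup v _ ((hp u).takeUntil hv)
      have hedge : (SimpleGraph.Walk.cons h.symm SimpleGraph.Walk.nil : G.Walk v u).IsPath := by
        simp [SimpleGraph.Walk.cons_isPath_iff, SimpleGraph.Walk.IsPath.nil, h.ne']
      have hd : ((p u).dropUntil v hv) =
          SimpleGraph.Walk.cons h.symm SimpleGraph.Walk.nil :=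
        (htree.existsUnique_path v u).unique ((hp u).dropUntil hv) hedge
      calc p u = ((p u).takeUntil v hv).append ((p u).dropUntil v hv) :=
              ((p u).take_spec hv).symm
        _ = (p v).concat h.symm := by
              rw [hq, hd, SimpleGraph.Walk.concat_eq_append]
    · left
      have hcp : ((p u).concat h).IsPath := by
        rw [← SimpleGraph.Walk.isPath_reverse_iff, SimpleGraph.Walk.reverse_concat]
        exact ((hp u).reverse).cons (by
          rw [SimpleGraph.Walk.support_reverse, List.mem_reverse]; exact hv)
      exact (hup v _ hcp).symm
  -- the eigenvector
  set x : V → F := fun v => sgWt φ s (p v) with hx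
  have hxne : ∀ v, x v ≠ 0 := fun v => sgWt_ne_zero φ s hφ0 hs0 (p v)
  -- the key local relation
  have rel : ∀ u v, G.Adj u v → φ u v * x v = s s(u, v) * x u := by
    intro u v h
    rcases key u v h with hk | hk
    · have : x v = x u * (s s(u, v) / φ u v) := by
        rw [hx]; simp only; rw [hk, sgWt_concat]
      rw [this]
      field_simp [hφ0 u v h]
    · have h1 : x u = x v * (s s(u, v) / φ v u) := by
        rw [hx]; simp only; rw [hk, sgWt_concat, Sym2.eq_swap]
      have h2 : φ u v * φ v u = s s(u, v) ^ 2 := by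
        rw [hφf u v h]; exact (hs u v h).symm
      have hφvu : φ v u ≠ 0 := hφ0 v u h.symm
      calc φ u v * x v = x v * (φ u v * φ v u / φ v u) := by
              rw [mul_div_assoc, div_self hφvu]; ring
        _ = x v * (s s(u, v) ^ 2 / φ v u) := by rw [h2]
        _ = s s(u, v) * (x v * (s s(u, v) / φ v u)) := by ring
        _ = s s(u, v) * x u := by rw [h1]
  -- degree as a sum over neighbors
  have hdeg : ∀ u, sgGDeg G s u = ∑ v ∈ Finset.univ.filter (G.Adj u ·), s s(u, v) := by
    intro u
    have himage : Finset.univ.filter (fun e : Sym2 V => e ∈ G.edgeSet ∧ u ∈ e) =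
        (Finset.univ.filter (G.Adj u ·)).image (fun v => s(u, v)) := by
      ext e
      simp only [Finset.mem_filter, Finset.mem_univ, true_and, Finset.mem_image]
      constructor
      · rintro ⟨he, hue⟩
        induction e with
        | _ a b =>
          rcases Sym2.mem_iff.1 hue with rfl | rfl
          · exact ⟨b, G.mem_edgeSet.1 he, rfl⟩
          · exact ⟨a, (G.mem_edgeSet.1 he).symm, Sym2.eq_swap⟩
      · rintro ⟨v, hv, rfl⟩
        exact ⟨G.mem_edgeSet.2 hv, Sym2.mem_mk_left u v⟩
    rw [sgGDeg, himage, Finset.sum_image]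
    intro a _ b _ hab
    exact Sym2.congr_right.1 hab
  -- the Laplacian kills x
  have hmv : (sgGLap G φ s).mulVec x = 0 := by
    funext u
    rw [sgGLap, Matrix.sub_mulVec]
    simp only [Pi.sub_apply, Matrix.mulVec_diagonal, Pi.zero_apply]
    have hadj : (sgAdj G φ).mulVec x u =
        ∑ v ∈ Finset.univ.filter (G.Adj u ·), φ u v * x v := by
      rw [Matrix.mulVec, Finset.sum_filter]
      simp only [dotProduct, sgAdj, Matrix.of_apply]
      congr 1
      ext v
      by_cases h : G.Adj u v <;> simp [h]
    rw [hadj, hdeg u, Finset.sum_mul]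
    rw [sub_eq_zero]
    apply Finset.sum_congr rfl
    intro v hv
    have h := (Finset.mem_filter.1 hv).2
    rw [(rel u v h)]
  exact Matrix.exists_mulVec_eq_zero_iff.mp ⟨x, fun h => hxne r (congrFun h r), hmv⟩
end

section
/- Let Φ_f = (C_n, F^×, φ, f) be a skew gain graph whose underlying graph is the cycle C_n on n ≥ 3 vertices, and fix for each edge e an element s(e) ∈ F with s(e)² = g(φ(e)). Then det(L_g(Φ_f)) = 2·∏_{e ∈ E(C_n)} s(e) − (φ(C_n) + f(φ(C_n))). -/
open scoped Classical
open Matrix Finset SimpleGraph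

variable {F V : Type*}

section Aux
open scoped Fin.NatCast Fin.CommRing
variable [Field F]

lemma sgc_fin_two_ne (m : ℕ) : (1 : Fin (m+3)) + 1 ≠ 0 := by
  have h1 : ((1 : Fin (m+3)) + 1).val = 2 := by
    rw [Fin.add_def, Fin.val_one]
    exact Nat.mod_eq_of_lt (by omega)
  intro h
  rw [h] at h1
  simp at h1

lemma sgc_fin_sub_one_ne (m : ℕ) (i : Fin (m+3)) : i - 1 ≠ i :=
  fun h => one_ne_zero (sub_eq_self.mp h)

lemma sgc_fin_add_one_ne (m : ℕ) (i : Fin (m+3)) : i + 1 ≠ i :=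
  fun h => one_ne_zero (left_eq_add.mp h.symm)

lemma sgc_fin_sub_ne_add (m : ℕ) (i : Fin (m+3)) : i - 1 ≠ i + 1 := by
  intro h
  rw [sub_eq_iff_eq_add, add_assoc, left_eq_add] at h
  exact sgc_fin_two_ne m h

lemma sgc_adj_succ (m : ℕ) (i : Fin (m+3)) : (cycleGraph (m+3)).Adj i (i+1) := by
  rw [cycleGraph_adj]
  exact Or.inr (add_sub_cancel_left i 1)

lemma sgc_gdeg (m : ℕ) (s : Sym2 (Fin (m+3)) → F) (v : Fin (m+3)) :
    sgGDeg (cycleGraph (m+3)) s v = s s(v - 1, v) + s s(v, v + 1) := by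
  have hne : (s(v - 1, v) : Sym2 (Fin (m+3))) ≠ s(v, v + 1) := by
    intro hcon
    rcases Sym2.eq_iff.mp hcon with ⟨h1, h2⟩ | ⟨h1, h2⟩
    · exact sgc_fin_sub_one_ne m v h1
    · exact sgc_fin_sub_ne_add m v h1
  rw [sgGDeg]
  refine (Finset.sum_congr ?_ fun _ _ => rfl).trans (Finset.sum_pair hne)
  ext e
  induction e using Sym2.ind with
  | _ a b =>
    simp only [Finset.mem_filter, Finset.mem_univ, true_and, Finset.mem_insert,
      Finset.mem_singleton, SimpleGraph.mem_edgeSet, Sym2.mem_iff, cycleGraph_adj, Sym2.eq_iff]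
    constructor
    · rintro ⟨h, hv⟩
      rcases h with h | h <;> rcases hv with rfl | rfl
      · exact Or.inl (Or.inr ⟨rfl, by rw [← h]; ring⟩)
      · exact Or.inr (Or.inr ⟨by rw [← h]; ring, rfl⟩)
      · exact Or.inr (Or.inl ⟨rfl, by rw [← h]; ring⟩)
      · exact Or.inl (Or.inl ⟨by rw [← h]; ring, rfl⟩)
    · rintro ((⟨rfl, rfl⟩ | ⟨rfl, rfl⟩) | (⟨rfl, rfl⟩ | ⟨rfl, rfl⟩))
      · exact ⟨Or.inr (sub_sub_cancel b 1), Or.inr rfl⟩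
      · exact ⟨Or.inl (sub_sub_cancel a 1), Or.inl rfl⟩
      · exact ⟨Or.inr (add_sub_cancel_left a 1), Or.inl rfl⟩
      · exact ⟨Or.inl (add_sub_cancel_left b 1), Or.inr rfl⟩

lemma sgc_edgeProd (m : ℕ) (s : Sym2 (Fin (m+3)) → F) :
    ∏ e ∈ Finset.univ.filter
      (fun e : Sym2 (Fin (m+3)) => e ∈ (cycleGraph (m+3)).edgeSet), s e
      = ∏ i : Fin (m+3), s s(i, i+1) := by
  have hinj : ∀ i ∈ (Finset.univ : Finset (Fin (m+3))), ∀ j ∈ Finset.univ,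
      (s(i, i+1) : Sym2 (Fin (m+3))) = s(j, j+1) → i = j := by
    intro i _ j _ hij
    rcases Sym2.eq_iff.mp hij with ⟨h1, h2⟩ | ⟨h1, h2⟩
    · exact h1
    · exfalso
      rw [← h2, add_assoc, left_eq_add] at h1
      exact sgc_fin_two_ne m h1
  refine (Finset.prod_congr ?_ fun _ _ => rfl).trans (Finset.prod_image hinj)
  ext e
  induction e using Sym2.ind with
  | _ a b =>
    simp only [Finset.mem_filter, Finset.mem_univ, true_and, Finset.mem_image,
      SimpleGraph.mem_edgeSet, cycleGraph_adj]
    constructor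
    · rintro (h | h)
      · exact ⟨b, by rw [show a = b + 1 by rw [← h]; ring]; exact Sym2.eq_swap⟩
      · exact ⟨a, by rw [show b = a + 1 by rw [← h]; ring]⟩
    · rintro ⟨i, hi⟩
      rcases Sym2.eq_iff.mp hi.symm with ⟨h1, h2⟩ | ⟨h1, h2⟩
      · exact Or.inr (by rw [h1, h2]; exact add_sub_cancel_left i 1)
      · exact Or.inl (by rw [h1, h2]; exact add_sub_cancel_left i 1)

lemma sgc_perm_id_or_rot {n : ℕ} (σ : Equiv.Perm (Fin (n + 3)))
    (h : ∀ i, σ i = i ∨ σ i = i - 1) : σ = 1 ∨ σ = (finRotate (n + 3))⁻¹ := by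
  by_cases hid : ∀ i, σ i = i
  · left; exact Equiv.ext fun i => hid i
  · right
    push_neg at hid
    obtain ⟨i₀, hi₀⟩ := hid
    have hi₀' : σ i₀ = i₀ - 1 := (h i₀).resolve_left hi₀
    have one_ne : (1 : Fin (n + 3)) ≠ 0 := one_ne_zero
    have key : ∀ k : ℕ, σ (i₀ - (k : Fin (n + 3))) = i₀ - (k : Fin (n + 3)) - 1 := by
      intro k
      induction k with
      | zero => simpa using hi₀'
      | succ k ih =>
        have hc : ((k + 1 : ℕ) : Fin (n + 3)) = (k : Fin (n + 3)) + 1 := by push_cast; ring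
        rw [hc, sub_add_eq_sub_sub]
        set j := i₀ - (k : Fin (n + 3)) with hj
        rcases h (j - 1) with h1 | h1
        · exfalso
          have h2 : σ (j - 1) = σ j := by rw [h1, ih]
          have h3 := σ.injective h2
          exact one_ne (sub_eq_self.mp h3)
        · exact h1
    apply Equiv.ext
    intro j
    have hval : ((i₀ - j : Fin (n + 3)).val : Fin (n + 3)) = i₀ - j := Fin.cast_val_eq_self _
    have hjj : i₀ - ((i₀ - j : Fin (n + 3)).val : Fin (n + 3)) = j := by
      rw [hval]; exact sub_sub_cancel _ _
    have h4 := key (i₀ - j : Fin (n + 3)).val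
    rw [hjj] at h4
    rw [h4]
    rw [Equiv.Perm.inv_def, Equiv.eq_symm_apply, finRotate_succ_apply, sub_add_cancel]

lemma sgc_det_cycBidiag {n : ℕ} (x y : Fin (n + 3) → F) :
    (Matrix.of fun i j : Fin (n + 3) => if j = i then x i else if j = i + 1 then y i else 0).det
      = ∏ i, x i + (-1) ^ n * ∏ i, y i := by
  set M : Matrix (Fin (n+3)) (Fin (n+3)) F :=
    Matrix.of fun i j => if j = i then x i else if j = i + 1 then y i else 0 with hM
  have hrot : ∀ j : Fin (n+3), (finRotate (n + 3))⁻¹ j = j - 1 := by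
    intro j
    rw [Equiv.Perm.inv_def, Equiv.symm_apply_eq, finRotate_succ_apply, sub_add_cancel]
  rw [Matrix.det_apply']
  have hvanish : ∀ σ ∈ (Finset.univ : Finset (Equiv.Perm (Fin (n+3)))),
      σ ∉ ({1, (finRotate (n + 3))⁻¹} : Finset (Equiv.Perm (Fin (n+3)))) →
      Equiv.Perm.sign σ * ∏ i, M (σ i) i = 0 := by
    intro σ _ hσ
    simp only [Finset.mem_insert, Finset.mem_singleton, not_or] at hσ
    have hnot : ¬ ∀ i, σ i = i ∨ σ i = i - 1 := by
      intro hall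
      rcases sgc_perm_id_or_rot σ hall with h | h
      · exact hσ.1 h
      · exact hσ.2 h
    push_neg at hnot
    obtain ⟨i, hi1, hi2⟩ := hnot
    have hz : M (σ i) i = 0 := by
      simp only [hM, Matrix.of_apply]
      rw [if_neg, if_neg]
      · intro hcon
        exact hi2 (by rw [eq_sub_iff_add_eq, ← hcon])
      · intro hcon; exact hi1 hcon.symm
    have hp : ∏ i, M (σ i) i = 0 := Finset.prod_eq_zero (Finset.mem_univ i) hz
    rw [hp, mul_zero]
  rw [← Finset.sum_subset (Finset.subset_univ _) hvanish]
  have hne : (1 : Equiv.Perm (Fin (n+3))) ≠ (finRotate (n + 3))⁻¹ := by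
    intro hcon
    have h1 := hrot 0
    rw [← hcon] at h1
    simp only [Equiv.Perm.one_apply] at h1
    exact one_ne_zero (sub_eq_self.mp h1.symm)
  rw [Finset.sum_pair hne]
  have hprod1 : ∏ i, M ((1 : Equiv.Perm (Fin (n+3))) i) i = ∏ i, x i := by
    apply Finset.prod_congr rfl; intro i _; simp [hM]
  have hprod2 : ∏ i, M (((finRotate (n+3))⁻¹) i) i = ∏ i, y i := by
    have h1 : ∀ i : Fin (n+3), M (((finRotate (n+3))⁻¹) i) i = y (i - 1) := by
      intro i
      rw [hrot]
      simp only [hM, Matrix.of_apply]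
      rw [if_neg, if_pos (sub_add_cancel i 1).symm]
      intro hcon; exact one_ne_zero (sub_eq_self.mp hcon.symm)
    rw [Finset.prod_congr rfl fun i _ => h1 i]
    exact Equiv.prod_comp (Equiv.subRight (1 : Fin (n+3))) y
  rw [hprod1, hprod2, Equiv.Perm.sign_one, Equiv.Perm.sign_inv, sign_finRotate]
  push_cast
  ring

lemma sgc_prod_neg {n : ℕ} (g : Fin n → F) :
    ∏ i, -g i = (-1) ^ n * ∏ i, g i := by
  calc ∏ i : Fin n, -g i = ∏ i : Fin n, (-1) * g i := by simp [neg_one_mul]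
    _ = (∏ _i : Fin n, (-1 : F)) * ∏ i, g i := Finset.prod_mul_distrib
    _ = (-1) ^ n * ∏ i, g i := by rw [Finset.prod_const, Finset.card_univ, Fintype.card_fin]

end Aux

/-- **Determinant of the g-Laplacian of a skew gain cycle** (Theorem 3.8).
For a skew gain graph on the cycle `C_n` with `n = m + 3 ≥ 3` vertices (vertices `Fin n` in
cyclic order, so that `φ(C_n) = Π_i φ(i, i+1)`),
`det L_g(Φ_f) = 2 Π_{e ∈ E(C_n)} s(e) - (φ(C_n) + f(φ(C_n)))`, where each `s e` is a chosen
square root of `g(φ(e))`. -/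
theorem skewGainCycle_gLaplacian_det
    [Field F] [CharZero F] (m : ℕ)
    (f : F → F) (hf0 : f 0 = 0) (hf1 : f 1 = 1)
    (hfmul : ∀ x y : F, f (x * y) = f x * f y) (hfinv : ∀ x : F, f (f x) = x)
    (φ : Fin (m + 3) → Fin (m + 3) → F)
    (hφ0 : ∀ u v, (cycleGraph (m + 3)).Adj u v → φ u v ≠ 0)
    (hφf : ∀ u v, (cycleGraph (m + 3)).Adj u v → φ v u = f (φ u v))
    (s : Sym2 (Fin (m + 3)) → F)
    (hs : ∀ u v, (cycleGraph (m + 3)).Adj u v → s s(u, v) ^ 2 = φ u v * f (φ u v)) :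
    (sgGLap (cycleGraph (m + 3)) φ s).det =
      2 * (∏ e ∈ Finset.univ.filter
            (fun e : Sym2 (Fin (m + 3)) => e ∈ (cycleGraph (m + 3)).edgeSet), s e) -
        ((∏ i : Fin (m + 3), φ i (i + 1)) + f (∏ i : Fin (m + 3), φ i (i + 1))) := by
  have hadj : ∀ i : Fin (m+3), (cycleGraph (m+3)).Adj i (i+1) := sgc_adj_succ m
  set ψ : Fin (m+3) → F := fun i => φ i (i+1) with hψdef
  set t : Fin (m+3) → F := fun i => s s(i, i+1) with htdef
  have ht2 : ∀ i, t i ^ 2 = ψ i * f (ψ i) := fun i => hs i (i+1) (hadj i)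
  have hf_ne : ∀ x : F, x ≠ 0 → f x ≠ 0 := by
    intro x hx hcon
    exact hx (by rw [← hfinv x, hcon, hf0])
  have hψ0 : ∀ i, ψ i ≠ 0 := fun i => hφ0 i (i+1) (hadj i)
  have ht0 : ∀ i, t i ≠ 0 := by
    intro i hcon
    have h2 := ht2 i
    rw [hcon, zero_pow (by norm_num : (2:ℕ) ≠ 0)] at h2
    exact (mul_ne_zero (hψ0 i) (hf_ne _ (hψ0 i))) h2.symm
  have hts : ∀ i : Fin (m+3), s s(i - 1, i) = t (i - 1) := by
    intro i
    show s s(i - 1, i) = s s(i - 1, (i-1) + 1)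
    rw [sub_add_cancel]
  have hψs : ∀ i : Fin (m+3), φ (i - 1) i = ψ (i - 1) := by
    intro i
    show φ (i - 1) i = φ (i - 1) ((i-1) + 1)
    rw [sub_add_cancel]
  let fm : F →* F := { toFun := f, map_one' := hf1, map_mul' := hfmul }
  have hfprod : ∀ (g : Fin (m+3) → F), f (∏ i, g i) = ∏ i, f (g i) := fun g =>
    map_prod fm g Finset.univ
  set A₁ : Matrix (Fin (m+3)) (Fin (m+3)) F :=
    Matrix.of (fun i j => if j = i then t i else if j = i + 1 then -f (ψ i) else 0) with hA₁
  set A₂ : Matrix (Fin (m+3)) (Fin (m+3)) F :=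
    Matrix.of (fun i j => if j = i then (1:F) else if j = i + 1 then -(ψ i / t i) else 0) with hA₂
  have hA₂diag : ∀ i : Fin (m+3), A₂ i i = 1 := by
    intro i; simp [hA₂]
  have hA₂sup : ∀ i : Fin (m+3), A₂ i (i+1) = -(ψ i / t i) := by
    intro i; simp [hA₂, sgc_fin_add_one_ne m i]
  have hA₂subdiag : ∀ i : Fin (m+3), A₂ (i-1) i = -(ψ (i-1) / t (i-1)) := by
    intro i; simp [hA₂, (sgc_fin_sub_one_ne m i).symm, sub_add_cancel]
  have hA₂zero : ∀ i j : Fin (m+3), j ≠ i → j ≠ i + 1 → A₂ i j = 0 := by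
    intro i j h1 h2; simp [hA₂, h1, h2]
  have hfact : sgGLap (cycleGraph (m+3)) φ s = A₁ᵀ * A₂ := by
    ext i j
    rw [Matrix.mul_apply]
    have hsum : ∀ k, A₁ᵀ i k * A₂ k j
        = (if k = i then t i * A₂ i j else 0)
          + (if k = i - 1 then (-f (ψ (i-1))) * A₂ (i-1) j else 0) := by
      intro k
      rw [Matrix.transpose_apply]
      by_cases hk : k = i
      · subst hk
        simp [hA₁, (sgc_fin_sub_one_ne m k).symm]
      · by_cases hk2 : k = i - 1
        · subst hk2
          simp [hA₁, sub_add_cancel, sgc_fin_sub_one_ne m i, (sgc_fin_sub_one_ne m i).symm]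
        · have hik : i ≠ k + 1 := fun hc => hk2 (by rw [hc]; open scoped Fin.CommRing in ring)
          simp [hA₁, Ne.symm hk, hik, hk, hk2]
    rw [Finset.sum_congr rfl (fun k _ => hsum k), Finset.sum_add_distrib,
      Finset.sum_ite_eq' Finset.univ i _, Finset.sum_ite_eq' Finset.univ (i-1) _,
      if_pos (Finset.mem_univ i), if_pos (Finset.mem_univ (i-1))]
    simp only [sgGLap, sgAdj, Matrix.sub_apply, Matrix.of_apply]
    by_cases hji : j = i
    · subst hji
      rw [Matrix.diagonal_apply_eq, sgc_gdeg m s j, hts j]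
      rw [if_neg (SimpleGraph.irrefl _), hA₂diag, hA₂subdiag]
      have hstep : -f (ψ (j-1)) * -(ψ (j-1) / t (j-1)) = t (j-1) := by
        have h2 := ht2 (j-1)
        have h0 := ht0 (j-1)
        calc -f (ψ (j-1)) * -(ψ (j-1) / t (j-1))
            = (ψ (j-1) * f (ψ (j-1))) / t (j-1) := by ring
          _ = t (j-1)^2 / t (j-1) := by rw [← h2]
          _ = t (j-1) := by rw [sq, mul_div_assoc, div_self h0, mul_one]
      rw [hstep]
      ring
    · by_cases hji1 : j = i + 1
      · subst hji1
        rw [hA₂sup i, hA₂zero (i-1) (i+1)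
            (fun h => sgc_fin_sub_ne_add m i h.symm)
            (by rw [sub_add_cancel]; exact sgc_fin_add_one_ne m i),
          Matrix.diagonal_apply_ne _ (Ne.symm (sgc_fin_add_one_ne m i)),
          if_pos (hadj i)]
        have hφψ : φ i (i + 1) = ψ i := rfl
        have h0 := ht0 i
        rw [hφψ]
        field_simp
        ring
      · by_cases hji2 : j = i - 1
        · subst hji2
          have hadj' : (cycleGraph (m+3)).Adj i (i-1) := by
            rw [cycleGraph_adj]
            exact Or.inl (sub_sub_cancel i 1)
          rw [hA₂zero i (i-1) (sgc_fin_sub_one_ne m i) (sgc_fin_sub_ne_add m i),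
            hA₂diag, Matrix.diagonal_apply_ne _ (Ne.symm (sgc_fin_sub_one_ne m i)),
            if_pos hadj', hφf (i-1) i (by rw [cycleGraph_adj]; exact Or.inr (sub_sub_cancel i 1)),
            hψs i]
          ring
        · have hnadj : ¬ (cycleGraph (m+3)).Adj i j := by
            rw [cycleGraph_adj]
            rintro (h | h)
            · exact hji2 (by rw [← h]; open scoped Fin.CommRing in ring)
            · exact hji1 (by rw [← h]; open scoped Fin.CommRing in ring)
          rw [hA₂zero i j hji hji1,
            hA₂zero (i-1) j hji2 (by rw [sub_add_cancel]; exact hji),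
            Matrix.diagonal_apply_ne _ (fun h => hji h.symm), if_neg hnadj]
          ring
  rw [hfact, Matrix.det_mul, Matrix.det_transpose]
  have hsign : ((-1:F)^m * (-1)^(m+3)) = -1 := by
    rw [← pow_add]
    have hmm : m + (m+3) = 2*(m+1)+1 := by ring
    rw [hmm, pow_succ, pow_mul, neg_one_sq, one_pow, one_mul]
  have hd1 : A₁.det = (∏ i, t i) - f (∏ i, ψ i) := by
    rw [hA₁, sgc_det_cycBidiag, sgc_prod_neg (fun i => f (ψ i)), ← hfprod ψ,
      ← mul_assoc, hsign]
    ring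
  have hd2 : A₂.det = 1 - (∏ i, ψ i) / (∏ i, t i) := by
    rw [hA₂, sgc_det_cycBidiag, sgc_prod_neg (fun i => ψ i / t i),
      Finset.prod_const_one, Finset.prod_div_distrib, ← mul_assoc, hsign]
    ring
  have hfold : (∏ e ∈ Finset.univ.filter
      (fun e : Sym2 (Fin (m + 3)) => e ∈ (cycleGraph (m + 3)).edgeSet), s e)
      = ∏ i, t i := sgc_edgeProd m s
  rw [hd1, hd2, hfold]
  have hS : (∏ i, t i) ≠ 0 := Finset.prod_ne_zero_iff.mpr fun i _ => ht0 i
  have hkey : (∏ i, ψ i) * f (∏ i, ψ i) = (∏ i, t i)^2 := by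
    rw [hfprod ψ, ← Finset.prod_mul_distrib, ← Finset.prod_pow]
    exact Finset.prod_congr rfl fun i _ => (ht2 i).symm
  field_simp
  linear_combination hkey
end

section
/- Let Φ_f = (G, F^×, φ, f) be a skew gain graph on a finite simple graph G with n vertices, fix for each edge an element s(e) ∈ F with s(e)² = g(φ(e)), and let Ψ be a spanning subgraph of G having exactly n edges (with s and φ restricted to its edges). If det(L_g(Ψ)) ≠ 0, then Ψ is an essential spanning subgraph of G, i.e., every connected component of Ψ is a 1-tree (connected with number of edges equal to number of vertices). -/
open scoped Classical
open Matrix Finset SimpleGraph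

variable {F V : Type*}

/-- The vertex set of the connected component `K` of `Ψ`. -/
noncomputable def compVerts [Fintype V] (Ψ : SimpleGraph V) (K : Ψ.ConnectedComponent) :
    Finset V :=
  Finset.univ.filter fun v => Ψ.connectedComponentMk v = K

/-- The edge set of the connected component `K` of `Ψ`: the edges of `Ψ` all of whose
endpoints lie in `K`. -/
noncomputable def compEdges [Fintype V] [DecidableEq V] (Ψ : SimpleGraph V)
    (K : Ψ.ConnectedComponent) : Finset (Sym2 V) :=
  Finset.univ.filter fun e : Sym2 V =>
    e ∈ Ψ.edgeSet ∧ ∀ v ∈ e, Ψ.connectedComponentMk v = K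

/-- **Nonsingular g-Laplacian forces an essential spanning subgraph** (Lemma 3.11).
Let `Φ_f` be a skew gain graph on `G` (with `n` vertices), and let `Ψ` be a spanning subgraph
of `G` with exactly `n` edges (with the skew gains `φ` and the square roots `s` restricted to
its edges).  If `det L_g(Ψ) ≠ 0`, then `Ψ` is an essential spanning subgraph of `G`, i.e.
every connected component of `Ψ` is a `1`-tree: it has as many edges as vertices (its
connectivity being automatic). -/
theorem skewGain_gLaplacian_det_ne_zero_essential
    [Field F] [CharZero F] [Fintype V] [DecidableEq V]
    (G Ψ : SimpleGraph V) (hΨG : Ψ ≤ G)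
    (hΨcard : (Finset.univ.filter (fun e : Sym2 V => e ∈ Ψ.edgeSet)).card = Fintype.card V)
    (f : F → F) (hf0 : f 0 = 0) (hf1 : f 1 = 1)
    (hfmul : ∀ x y : F, f (x * y) = f x * f y) (hfinv : ∀ x : F, f (f x) = x)
    (φ : V → V → F)
    (hφ0 : ∀ u v, G.Adj u v → φ u v ≠ 0)
    (hφf : ∀ u v, G.Adj u v → φ v u = f (φ u v))
    (s : Sym2 V → F)
    (hs : ∀ u v, G.Adj u v → s s(u, v) ^ 2 = φ u v * f (φ u v))
    (hdet : (sgGLap Ψ φ s).det ≠ 0) :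
    ∀ K : Ψ.ConnectedComponent, (compEdges Ψ K).card = (compVerts Ψ K).card := by
  classical
  have hmemV : ∀ (K : Ψ.ConnectedComponent) (v : V),
      v ∈ compVerts Ψ K ↔ Ψ.connectedComponentMk v = K := by
    intro K v; simp [compVerts]
  have hmemE : ∀ (K : Ψ.ConnectedComponent) (e : Sym2 V),
      e ∈ compEdges Ψ K ↔ e ∈ Ψ.edgeSet ∧ ∀ v ∈ e, Ψ.connectedComponentMk v = K := by
    intro K e; simp [compEdges]
  have hsame : ∀ e ∈ Ψ.edgeSet, ∀ v ∈ e, ∀ w ∈ e,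
      Ψ.connectedComponentMk v = Ψ.connectedComponentMk w := by
    intro e he
    induction e using Sym2.ind with
    | _ a b =>
      rw [SimpleGraph.mem_edgeSet] at he
      have hab : Ψ.connectedComponentMk a = Ψ.connectedComponentMk b :=
        SimpleGraph.ConnectedComponent.eq.mpr he.reachable
      intro v hv w hw
      rw [Sym2.mem_iff] at hv hw
      rcases hv with rfl | rfl <;> rcases hw with rfl | rfl <;>
        first | rfl | exact hab | exact hab.symm
  -- Key inequality: each component has at least as many edges as vertices.
  have hge : ∀ K : Ψ.ConnectedComponent, (compVerts Ψ K).card ≤ (compEdges Ψ K).card := by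
    intro K
    by_contra hlt
    push_neg at hlt
    set A := compVerts Ψ K with hA
    set B := compEdges Ψ K with hB
    let E : ({ v // v ∈ A } → F) →ₗ[F] (V → F) :=
      { toFun := fun x v => if h : v ∈ A then x ⟨v, h⟩ else 0
        map_add' := by intro x y; funext v; by_cases h : v ∈ A <;> simp [h]
        map_smul' := by intro c x; funext v; by_cases h : v ∈ A <;> simp [h] }
    let T : ({ v // v ∈ A } → F) →ₗ[F] ({ e // e ∈ B } → F) :=
      { toFun := fun x e => s e.1 * E x ((e.1).out.1) - φ (e.1).out.1 (e.1).out.2 * E x ((e.1).out.2)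
        map_add' := by intro x y; funext e; simp; ring
        map_smul' := by intro c x; funext e; simp; ring }
    have hker : LinearMap.ker T ≠ ⊥ := by
      apply LinearMap.ker_ne_bot_of_finrank_lt
      rw [Module.finrank_pi, Module.finrank_pi, Fintype.card_coe, Fintype.card_coe]
      exact hlt
    obtain ⟨x, hxker, hx0⟩ := (Submodule.ne_bot_iff _).mp hker
    set y : V → F := E x with hy
    have hydef : ∀ v : V, y v = if h : v ∈ A then x ⟨v, h⟩ else 0 := fun v => rfl
    -- oriented kernel relation
    have hkey : ∀ e (he : e ∈ B), s e * y e.out.1 = φ e.out.1 e.out.2 * y e.out.2 := by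
      intro e he
      have h0 := congrFun (LinearMap.mem_ker.mp hxker) ⟨e, he⟩
      have : s e * E x e.out.1 - φ e.out.1 e.out.2 * E x e.out.2 = 0 := h0
      rw [sub_eq_zero] at this
      exact this
    -- the edge relation for every oriented edge inside the component `K`
    have hedge : ∀ a b : V, Ψ.Adj a b → Ψ.connectedComponentMk a = K →
        s s(a, b) * y a = φ a b * y b := by
      intro a b hab haK
      have habG : G.Adj a b := hΨG hab
      have heE : s(a, b) ∈ Ψ.edgeSet := Ψ.mem_edgeSet.mpr hab
      have heB : s(a, b) ∈ B := by
        rw [hB, hmemE]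
        exact ⟨heE, fun v hv =>
          (hsame _ heE v hv a (Sym2.mem_mk_left a b)).trans haK⟩
      have hk := hkey _ heB
      have hout : s((s(a,b)).out.1, (s(a,b)).out.2) = s(a, b) := (s(a,b)).out_eq
      rw [Sym2.eq_iff] at hout
      have hfne : f (φ a b) ≠ 0 := by
        intro h0
        exact hφ0 a b habG (by rw [← hfinv (φ a b), h0, hf0])
      have hs2 := hs a b habG
      have hsne : s s(a, b) ≠ 0 := by
        intro h0
        rw [h0, zero_pow two_ne_zero] at hs2
        rcases mul_eq_zero.mp hs2.symm with h | h
        · exact hφ0 a b habG h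
        · exact hfne h
      rcases hout with ⟨h1, h2⟩ | ⟨h1, h2⟩
      · rw [h1, h2] at hk; exact hk
      · rw [h1, h2] at hk
        -- hk : s s(a,b) * y b = φ b a * y a
        have hba : φ b a = f (φ a b) := hφf a b habG
        apply mul_left_cancel₀ hsne
        calc s s(a,b) * (s s(a,b) * y a) = s s(a,b) ^ 2 * y a := by ring
          _ = φ a b * (φ b a * y a) := by rw [hs2, ← hba]; ring
          _ = φ a b * (s s(a,b) * y b) := by rw [← hk]
          _ = s s(a,b) * (φ a b * y b) := by ring
    -- y is nonzero
    have hy0 : y ≠ 0 := by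
      intro h
      apply hx0
      funext u
      have := congrFun h u.1
      rw [hydef u.1, dif_pos u.2] at this
      simpa using this
    -- y is in the kernel of the g-Laplacian
    have hLy : (sgGLap Ψ φ s).mulVec y = 0 := by
      funext v
      have expand : (sgGLap Ψ φ s).mulVec y v
          = sgGDeg Ψ s v * y v - ∑ u, (if Ψ.Adj v u then φ v u else 0) * y u := by
        rw [sgGLap, Matrix.sub_mulVec, Pi.sub_apply, Matrix.mulVec_diagonal]
        congr 1
      rw [Pi.zero_apply, expand, sub_eq_zero]
      by_cases hvK : Ψ.connectedComponentMk v = K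
      · -- v is in the component K
        have hLHS : sgGDeg Ψ s v
            = ∑ e ∈ Finset.univ.filter (fun e : Sym2 V => e ∈ Ψ.edgeSet ∧ v ∈ e), s e := rfl
        have hRHS : ∑ u, (if Ψ.Adj v u then φ v u else 0) * y u
            = ∑ u ∈ Finset.univ.filter (fun u => Ψ.Adj v u), φ v u * y u := by
          rw [Finset.sum_filter]
          exact Finset.sum_congr rfl fun u _ => by split_ifs <;> simp
        rw [hLHS, hRHS, Finset.sum_mul]
        refine (Finset.sum_bij (fun u hu => s(v, u)) ?_ ?_ ?_ ?_).symm
        · intro u hu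
          rw [Finset.mem_filter] at hu
          exact Finset.mem_filter.mpr ⟨Finset.mem_univ _,
            Ψ.mem_edgeSet.mpr hu.2, Sym2.mem_mk_left v u⟩
        · intro u1 hu1 u2 hu2 h
          exact Sym2.congr_right.mp h
        · intro e he
          rw [Finset.mem_filter] at he
          obtain ⟨-, heE, hv⟩ := he
          refine ⟨Sym2.Mem.other' hv, ?_, Sym2.other_spec' hv⟩
          rw [Finset.mem_filter]
          refine ⟨Finset.mem_univ _, ?_⟩
          have : s(v, Sym2.Mem.other' hv) ∈ Ψ.edgeSet := (Sym2.other_spec' hv).symm ▸ heE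
          exact Ψ.mem_edgeSet.mp this
        · intro u hu
          rw [Finset.mem_filter] at hu
          exact (hedge v u hu.2 hvK).symm
      · -- v is not in the component K
        have hyv : y v = 0 := by
          rw [hydef v, dif_neg]
          rw [hA, hmemV]; exact hvK
        have hterm : ∀ u, (if Ψ.Adj v u then φ v u else 0) * y u = 0 := by
          intro u
          by_cases hadj : Ψ.Adj v u
          · have hcomp : Ψ.connectedComponentMk u = Ψ.connectedComponentMk v :=
              SimpleGraph.ConnectedComponent.eq.mpr hadj.symm.reachable
            have huK : Ψ.connectedComponentMk u ≠ K := fun h => hvK (hcomp.symm.trans h)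
            have hyu : y u = 0 := by
              rw [hydef u, dif_neg]
              rw [hA, hmemV]; exact huK
            rw [hyu, mul_zero]
          · rw [if_neg hadj, zero_mul]
        rw [hyv, mul_zero, Finset.sum_eq_zero fun u _ => hterm u]
    exact hdet (Matrix.exists_mulVec_eq_zero_iff.mp ⟨y, hy0, hLy⟩)
  -- Counting
  have hVsum : Fintype.card V = ∑ K : Ψ.ConnectedComponent, (compVerts Ψ K).card := by
    rw [← Finset.card_univ,
      Finset.card_eq_sum_card_fiberwise (f := Ψ.connectedComponentMk)
        (t := Finset.univ) (fun v _ => Finset.mem_univ _)]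
    refine Finset.sum_congr rfl fun K _ => ?_
    congr 1
  have hEsum : Fintype.card V = ∑ K : Ψ.ConnectedComponent, (compEdges Ψ K).card := by
    rw [← hΨcard,
      Finset.card_eq_sum_card_fiberwise
        (f := fun e : Sym2 V => Ψ.connectedComponentMk e.out.1)
        (t := Finset.univ) (fun e _ => Finset.mem_univ _)]
    refine Finset.sum_congr rfl fun K _ => ?_
    congr 1
    rw [Finset.filter_filter]
    ext e
    rw [Finset.mem_filter, hmemE]
    simp only [Finset.mem_univ, true_and]
    constructor
    · rintro ⟨he, hK⟩
      exact ⟨he, fun w hw => (hsame e he w hw _ (Sym2.out_fst_mem e)).trans hK⟩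
    · rintro ⟨he, hall⟩
      exact ⟨he, hall _ (Sym2.out_fst_mem e)⟩
  have hsum_eq : ∑ K : Ψ.ConnectedComponent, (compVerts Ψ K).card
      = ∑ K : Ψ.ConnectedComponent, (compEdges Ψ K).card := hVsum.symm.trans hEsum
  have hall := (Finset.sum_eq_sum_iff_of_le fun K _ => hge K).mp hsum_eq
  intro K
  exact (hall K (Finset.mem_univ K)).symm
end
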